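/- arXiv:2008.05338 — 9 statements merged into one kernel-verified Lean document; each statement's English description precedes it below -/
import Mathlib

section
/- Suppose that T₀ ⟂ (C, X) | Z and B ⟂ (C, T₀, Z) | X. Then T ⟂ C | (X, Z); that is, the survival time T and the censoring time C are conditionally independent given the covariate vector (X, Z). -/
open MeasureTheory ProbabilityTheory

section Aux

lemma comap_le_comap_of_comp' {Ω : Type*}
    {α β : Type*} [MeasurableSpace α] [MeasurableSpace β]
    {f : Ω → α} {g : Ω → β} {h : β → α} (hh : Measurable h) (hfg : ∀ ω, f ω = h (g ω)) :
    MeasurableSpace.comap f inferInstance ≤ MeasurableSpace.comap g inferInstance := by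
  have hfg' : f = h ∘ g := funext hfg
  rw [hfg', ← MeasurableSpace.comap_comp]
  exact MeasurableSpace.comap_mono hh.comap_le

lemma measurableSet_comap_of_comp' {Ω : Type*}
    {α β : Type*} [MeasurableSpace α] [MeasurableSpace β]
    {k : Ω → α} {g : Ω → β} {h : β → α} (hh : Measurable h) (hk : ∀ ω, k ω = h (g ω))
    {s : Set α} (hs : MeasurableSet s) :
    MeasurableSet[MeasurableSpace.comap g inferInstance] (k ⁻¹' s) :=
  ⟨h ⁻¹' s, hh hs, by ext ω; simp [Set.mem_preimage, hk ω]⟩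

lemma condExp_comap_prod_of_condIndepFun
    {Ω : Type*} {mW mWV : MeasurableSpace Ω} {mΩ : MeasurableSpace Ω} [StandardBorelSpace Ω]
    {μ : Measure Ω} [IsProbabilityMeasure μ]
    {α β γ : Type*} [MeasurableSpace α] [MeasurableSpace β] [MeasurableSpace γ]
    {U : Ω → α} {V : Ω → β} {W : Ω → γ}
    (hU : Measurable U) (hV : Measurable V) (hW : Measurable W)
    (hmW_def : mW = MeasurableSpace.comap W inferInstance)
    (hmWV_def : mWV = MeasurableSpace.comap (fun ω => (W ω, V ω)) inferInstance)
    (h : CondIndepFun (MeasurableSpace.comap W inferInstance) hW.comap_le U V μ)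
    {s : Set α} (hs : MeasurableSet s) :
    (μ⟦U ⁻¹' s | mWV⟧) =ᵐ[μ] (μ⟦U ⁻¹' s | mW⟧) := by
  have hmW : mW ≤ mΩ := hmW_def ▸ hW.comap_le
  have hmWV : mWV ≤ mΩ := hmWV_def ▸ (hW.prodMk hV).comap_le
  have hWle : mW ≤ mWV := by
    rw [hmW_def, hmWV_def]
    exact comap_le_comap_of_comp' measurable_fst (fun ω => rfl)
  set f : Ω → ℝ := (U ⁻¹' s).indicator (fun _ => (1:ℝ)) with hf_def
  have hf_int : Integrable f μ := (integrable_const (1:ℝ)).indicator (hU hs)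
  set φ : Ω → ℝ := μ[f | mW] with hφ_def
  set rects : Set (Set Ω) :=
    {t | ∃ u v, MeasurableSet u ∧ MeasurableSet v ∧ t = W ⁻¹' u ∩ V ⁻¹' v} with hrects_def
  have h_eq : mWV = MeasurableSpace.generateFrom rects := by
    apply le_antisymm
    · have h2 : mWV = MeasurableSpace.generateFrom
          (Set.preimage (fun ω => (W ω, V ω)) ''
            (Set.image2 (· ×ˢ ·) {s : Set γ | MeasurableSet s} {t : Set β | MeasurableSet t})) := by
        rw [hmWV_def, ← generateFrom_prod, MeasurableSpace.comap_generateFrom]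
      rw [h2]
      apply MeasurableSpace.generateFrom_mono
      rintro _ ⟨_, ⟨u, hu, v, hv, rfl⟩, rfl⟩
      exact ⟨u, v, hu, hv, Set.mk_preimage_prod W V⟩
    · apply MeasurableSpace.generateFrom_le
      rintro t ⟨u, v, hu, hv, rfl⟩
      rw [hmWV_def]
      exact MeasurableSpace.measurableSet_comap.mpr
        ⟨u ×ˢ v, (hu.prod hv), Set.mk_preimage_prod W V⟩
  have hpi : IsPiSystem rects := by
    rintro t1 ⟨u1, v1, hu1, hv1, rfl⟩ t2 ⟨u2, v2, hu2, hv2, rfl⟩ -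
    exact ⟨u1 ∩ u2, v1 ∩ v2, hu1.inter hu2, hv1.inter hv2, by
      ext ω; simp only [Set.mem_inter_iff, Set.mem_preimage]; tauto⟩
  have htot : ∫ x, φ x ∂μ = ∫ x, f x ∂μ := integral_condExp hmW
  have heq_int : ∀ t, MeasurableSet[mWV] t → ∫ x in t, φ x ∂μ = ∫ x in t, f x ∂μ := by
    intro t ht
    refine MeasurableSpace.induction_on_inter
      (C := fun t _ => ∫ x in t, φ x ∂μ = ∫ x in t, f x ∂μ) (m := mWV)
      h_eq hpi ?_ ?_ ?_ ?_ t ht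
    · simp
    · rintro t ⟨u, v, hu, hv, rfl⟩
      set iV : Ω → ℝ := (V ⁻¹' v).indicator (fun _ => (1:ℝ)) with hiV_def
      have hiV_int : Integrable iV μ := (integrable_const (1:ℝ)).indicator (hV hv)
      have hi1 : MeasurableSet[mW] (W ⁻¹' u) := hmW_def ▸ ⟨u, hu, rfl⟩
      have hUs : MeasurableSet[MeasurableSpace.comap U inferInstance] (U ⁻¹' s) := ⟨s, hs, rfl⟩
      have hVv : MeasurableSet[MeasurableSpace.comap V inferInstance] (V ⁻¹' v) := ⟨v, hv, rfl⟩
      have hind : (μ⟦U ⁻¹' s ∩ V ⁻¹' v | mW⟧)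
          =ᵐ[μ] (μ⟦U ⁻¹' s | mW⟧) * (μ⟦V ⁻¹' v | mW⟧) := by
        rw [hmW_def]
        exact (condIndepFun_iff _ hW.comap_le U V hU hV μ).mp h _ _ hUs hVv
      have e1 : φ * iV = (V ⁻¹' v).indicator φ := by
        funext x
        by_cases hx : x ∈ V ⁻¹' v <;>
          simp [hiV_def, Set.indicator_of_mem, Set.indicator_of_notMem, hx]
      have hφiV : Integrable (φ * iV) μ := by
        rw [e1]; exact integrable_condExp.indicator (hV hv)
      have hUV_int : Integrable ((U ⁻¹' s ∩ V ⁻¹' v).indicator (fun _ => (1:ℝ))) μ :=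
        (integrable_const (1:ℝ)).indicator ((hU hs).inter (hV hv))
      calc ∫ x in W ⁻¹' u ∩ V ⁻¹' v, φ x ∂μ
          = ∫ x in W ⁻¹' u, (V ⁻¹' v).indicator φ x ∂μ := (setIntegral_indicator (hV hv)).symm
        _ = ∫ x in W ⁻¹' u, (φ * iV) x ∂μ := by rw [e1]
        _ = ∫ x in W ⁻¹' u, (μ[φ * iV | mW]) x ∂μ := (setIntegral_condExp hmW hφiV hi1).symm
        _ = ∫ x in W ⁻¹' u, (φ * μ[iV | mW]) x ∂μ := by
              refine integral_congr_ae (ae_restrict_of_ae ?_)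
              exact condExp_mul_of_stronglyMeasurable_left stronglyMeasurable_condExp hφiV hiV_int
        _ = ∫ x in W ⁻¹' u, (μ[(U ⁻¹' s ∩ V ⁻¹' v).indicator (fun ω => (1:ℝ)) | mW]) x ∂μ := by
              refine integral_congr_ae (ae_restrict_of_ae ?_)
              exact hind.symm
        _ = ∫ x in W ⁻¹' u, ((U ⁻¹' s ∩ V ⁻¹' v).indicator (fun ω => (1:ℝ))) x ∂μ :=
              setIntegral_condExp hmW hUV_int hi1
        _ = ∫ x in W ⁻¹' u, ((V ⁻¹' v).indicator f) x ∂μ := by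
              rw [show (V ⁻¹' v).indicator f
                  = (U ⁻¹' s ∩ V ⁻¹' v).indicator (fun ω => (1:ℝ)) from by
                rw [hf_def, Set.indicator_indicator, Set.inter_comm]]
        _ = ∫ x in W ⁻¹' u ∩ V ⁻¹' v, f x ∂μ := setIntegral_indicator (hV hv)
    · intro t htm hCt
      have ht0 : MeasurableSet t := hmWV t htm
      have h1 := integral_add_compl ht0 (integrable_condExp : Integrable φ μ)
      have h2 := integral_add_compl ht0 hf_int
      linarith
    · intro g hdisj hgm hCg
      rw [integral_iUnion (fun i => hmWV _ (hgm i)) hdisj integrable_condExp.integrableOn,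
          integral_iUnion (fun i => hmWV _ (hgm i)) hdisj hf_int.integrableOn]
      exact tsum_congr hCg
  exact (ae_eq_condExp_of_forall_setIntegral_eq hmWV hf_int
    (fun t _ _ => integrable_condExp.integrableOn)
    (fun t ht _ => heq_int t ht)
    ((stronglyMeasurable_condExp.mono hWle).aestronglyMeasurable)).symm

end Aux

section Aux2

lemma condExp_interm_of_condIndepFun
    {Ω : Type*} {m mW mWV : MeasurableSpace Ω} {mΩ : MeasurableSpace Ω} [StandardBorelSpace Ω]
    {μ : Measure Ω} [IsProbabilityMeasure μ]
    {α β γ : Type*} [MeasurableSpace α] [MeasurableSpace β] [MeasurableSpace γ]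
    {U : Ω → α} {V : Ω → β} {W : Ω → γ}
    (hU : Measurable U) (hV : Measurable V) (hW : Measurable W)
    (hmW_def : mW = MeasurableSpace.comap W inferInstance)
    (hmWV_def : mWV = MeasurableSpace.comap (fun ω => (W ω, V ω)) inferInstance)
    (h : CondIndepFun (MeasurableSpace.comap W inferInstance) hW.comap_le U V μ)
    {s : Set α} (hs : MeasurableSet s)
    (hm1 : mW ≤ m) (hm2 : m ≤ mWV) :
    (μ⟦U ⁻¹' s | m⟧) =ᵐ[μ] (μ⟦U ⁻¹' s | mW⟧) := by
  have hmWV : mWV ≤ mΩ := hmWV_def ▸ (hW.prodMk hV).comap_le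
  have hmΩ : m ≤ mΩ := hm2.trans hmWV
  have hK := condExp_comap_prod_of_condIndepFun hU hV hW hmW_def hmWV_def h hs
  calc μ[(U ⁻¹' s).indicator (fun ω => (1:ℝ))|m]
      =ᵐ[μ] μ[μ[(U ⁻¹' s).indicator (fun ω => (1:ℝ))|mWV]|m] :=
        (condExp_condExp_of_le hm2 hmWV).symm
    _ =ᵐ[μ] μ[(μ⟦U ⁻¹' s|mW⟧)|m] := condExp_congr_ae hK
    _ =ᵐ[μ] (μ⟦U ⁻¹' s|mW⟧) := by
        rw [condExp_of_stronglyMeasurable hmΩ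
          (stronglyMeasurable_condExp.mono hm1) integrable_condExp]

end Aux2

section Rect

lemma key_rect
    {Ω : Type*} {m m₂ m₃ m₄ mX mZ : MeasurableSpace Ω} {mΩ : MeasurableSpace Ω}
    [StandardBorelSpace Ω]
    {p q : ℕ} {μ : Measure Ω} [IsProbabilityMeasure μ]
    {B : Ω → Bool} {T₀ C : Ω → ℝ} {X : Ω → (Fin p → ℝ)} {Z : Ω → (Fin q → ℝ)}
    (hB : Measurable B) (hT₀ : Measurable T₀) (hC : Measurable C)
    (hX : Measurable X) (hZ : Measurable Z)
    (h1 : CondIndepFun (MeasurableSpace.comap Z inferInstance) hZ.comap_le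
      T₀ (fun ω => (C ω, X ω)) μ)
    (h2 : CondIndepFun (MeasurableSpace.comap X inferInstance) hX.comap_le
      B (fun ω => (C ω, T₀ ω, Z ω)) μ)
    (hm_def : m = MeasurableSpace.comap (fun ω => (X ω, Z ω)) inferInstance)
    (hm₂_def : m₂ = MeasurableSpace.comap (fun ω => (X ω, (C ω, T₀ ω, Z ω))) inferInstance)
    (hm₃_def : m₃ = MeasurableSpace.comap (fun ω => (Z ω, (C ω, X ω))) inferInstance)
    (hm₄_def : m₄ = MeasurableSpace.comap (fun ω => (X ω, (T₀ ω, Z ω))) inferInstance)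
    (hmX_def : mX = MeasurableSpace.comap X inferInstance)
    (hmZ_def : mZ = MeasurableSpace.comap Z inferInstance)
    {sB : Set Bool} {sT sC : Set ℝ}
    (hsB : MeasurableSet sB) (hsT : MeasurableSet sT) (hsC : MeasurableSet sC) :
    (μ⟦(B ⁻¹' sB ∩ T₀ ⁻¹' sT) ∩ C ⁻¹' sC | m⟧)
      =ᵐ[μ] (μ⟦B ⁻¹' sB ∩ T₀ ⁻¹' sT | m⟧) * (μ⟦C ⁻¹' sC | m⟧) := by
  have hm : m ≤ mΩ := hm_def ▸ (hX.prodMk hZ).comap_le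
  have hm₂ : m₂ ≤ mΩ := hm₂_def ▸ (hX.prodMk (hC.prodMk (hT₀.prodMk hZ))).comap_le
  have hm₃ : m₃ ≤ mΩ := hm₃_def ▸ (hZ.prodMk (hC.prodMk hX)).comap_le
  have hm₄ : m₄ ≤ mΩ := hm₄_def ▸ (hX.prodMk (hT₀.prodMk hZ)).comap_le
  have hmX : mX ≤ mΩ := hmX_def ▸ hX.comap_le
  have hmZ : mZ ≤ mΩ := hmZ_def ▸ hZ.comap_le
  have hX_m : mX ≤ m := by
    rw [hmX_def, hm_def]; exact comap_le_comap_of_comp' measurable_fst fun ω => rfl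
  have hZ_m : mZ ≤ m := by
    rw [hmZ_def, hm_def]; exact comap_le_comap_of_comp' measurable_snd fun ω => rfl
  have hX_m₃ : mX ≤ m₃ := by
    rw [hmX_def, hm₃_def]; exact comap_le_comap_of_comp' measurable_snd.snd fun ω => rfl
  have hX_m₄ : mX ≤ m₄ := by
    rw [hmX_def, hm₄_def]; exact comap_le_comap_of_comp' measurable_fst fun ω => rfl
  have hm_m₂ : m ≤ m₂ := by
    rw [hm_def, hm₂_def]
    exact comap_le_comap_of_comp' (measurable_fst.prodMk measurable_snd.snd.snd) fun ω => rfl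
  have hm_m₃ : m ≤ m₃ := by
    rw [hm_def, hm₃_def]
    exact comap_le_comap_of_comp' (measurable_snd.snd.prodMk measurable_fst) fun ω => rfl
  have hm_m₄ : m ≤ m₄ := by
    rw [hm_def, hm₄_def]
    exact comap_le_comap_of_comp' (measurable_fst.prodMk measurable_snd.snd) fun ω => rfl
  have hm₄_m₂ : m₄ ≤ m₂ := by
    rw [hm₄_def, hm₂_def]
    exact comap_le_comap_of_comp' (measurable_fst.prodMk measurable_snd.snd) fun ω => rfl
  have hT_m₂ : MeasurableSet[m₂] (T₀ ⁻¹' sT) := by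
    rw [hm₂_def]; exact measurableSet_comap_of_comp' measurable_snd.snd.fst (fun ω => rfl) hsT
  have hC_m₂ : MeasurableSet[m₂] (C ⁻¹' sC) := by
    rw [hm₂_def]; exact measurableSet_comap_of_comp' measurable_snd.fst (fun ω => rfl) hsC
  have hC_m₃ : MeasurableSet[m₃] (C ⁻¹' sC) := by
    rw [hm₃_def]; exact measurableSet_comap_of_comp' measurable_snd.fst (fun ω => rfl) hsC
  have hT_m₄ : MeasurableSet[m₄] (T₀ ⁻¹' sT) := by
    rw [hm₄_def]; exact measurableSet_comap_of_comp' measurable_snd.fst (fun ω => rfl) hsT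
  set fB : Ω → ℝ := (B ⁻¹' sB).indicator (fun _ => (1:ℝ)) with hfB_def
  set fT : Ω → ℝ := (T₀ ⁻¹' sT).indicator (fun _ => (1:ℝ)) with hfT_def
  set fC : Ω → ℝ := (C ⁻¹' sC).indicator (fun _ => (1:ℝ)) with hfC_def
  have hfB_int : Integrable fB μ := (integrable_const (1:ℝ)).indicator (hB hsB)
  have hfT_int : Integrable fT μ := (integrable_const (1:ℝ)).indicator (hT₀ hsT)
  have hfC_int : Integrable fC μ := (integrable_const (1:ℝ)).indicator (hC hsC)
  set φ : Ω → ℝ := μ[fB | mX] with hφ_def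
  set ψ : Ω → ℝ := μ[fT | mZ] with hψ_def
  have hφ2 : μ[fB | m₂] =ᵐ[μ] φ :=
    condExp_comap_prod_of_condIndepFun hB (hC.prodMk (hT₀.prodMk hZ)) hX hmX_def hm₂_def h2 hsB
  have hφ4 : μ[fB | m₄] =ᵐ[μ] φ :=
    condExp_interm_of_condIndepFun hB (hC.prodMk (hT₀.prodMk hZ)) hX hmX_def hm₂_def h2 hsB
      hX_m₄ hm₄_m₂
  have hψ3 : μ[fT | m₃] =ᵐ[μ] ψ :=
    condExp_comap_prod_of_condIndepFun hT₀ (hC.prodMk hX) hZ hmZ_def hm₃_def h1 hsT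
  have hψm : μ[fT | m] =ᵐ[μ] ψ :=
    condExp_interm_of_condIndepFun hT₀ (hC.prodMk hX) hZ hmZ_def hm₃_def h1 hsT hZ_m hm_m₃
  have hind_norm : ∀ (s : Set Ω) (x : Ω), ‖(s.indicator (fun _ => (1:ℝ))) x‖ ≤ 1 := by
    intro s x
    by_cases hx : x ∈ s <;> simp [Set.indicator_of_mem, Set.indicator_of_notMem, hx]
  have hmulint : ∀ (s : Set Ω), MeasurableSet s → ∀ {g : Ω → ℝ}, Integrable g μ →
      Integrable ((s.indicator (fun _ => (1:ℝ))) * g) μ := fun s hsm g hg =>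
    hg.bdd_mul (stronglyMeasurable_const.indicator hsm).aestronglyMeasurable
      (Filter.Eventually.of_forall (hind_norm s))
  have hφ_bd : ∀ᵐ x ∂μ, ‖φ x‖ ≤ 1 := by
    have h0 : 0 ≤ᵐ[μ] φ :=
      condExp_nonneg (Filter.Eventually.of_forall fun x =>
        Set.indicator_nonneg (fun _ _ => zero_le_one) x)
    have h1' : φ ≤ᵐ[μ] μ[(fun _ => (1:ℝ)) | mX] :=
      condExp_mono hfB_int (integrable_const 1)
        (Filter.Eventually.of_forall fun x => Set.indicator_le_self' (fun _ _ => zero_le_one) x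
          |>.trans (le_of_eq rfl))
    rw [condExp_const hmX] at h1'
    filter_upwards [h0, h1'] with x hx0 hx1
    simp only [Pi.zero_apply] at hx0
    rw [Real.norm_eq_abs, abs_le]
    exact ⟨by linarith, hx1⟩
  have hfTC_B : Integrable ((fT * fC) * fB) μ := by
    rw [mul_assoc]; exact hmulint _ (hT₀ hsT) (hmulint _ (hC hsC) hfB_int)
  have hfCφ_T : Integrable ((fC * φ) * fT) μ := by
    rw [mul_comm (fC * φ) fT]
    exact hmulint _ (hT₀ hsT) (hmulint _ (hC hsC) integrable_condExp)
  have hψC : Integrable (ψ * fC) μ := by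
    rw [mul_comm]; exact hmulint _ (hC hsC) integrable_condExp
  have hφψC : Integrable ((φ * ψ) * fC) μ := by
    rw [mul_assoc]
    exact hψC.bdd_mul integrable_condExp.aestronglyMeasurable hφ_bd
  have hfT_B : Integrable (fT * fB) μ := hmulint _ (hT₀ hsT) hfB_int
  have hφT : Integrable (φ * fT) μ :=
    hfT_int.bdd_mul integrable_condExp.aestronglyMeasurable hφ_bd
  have hTC_meas : StronglyMeasurable[m₂] (fT * fC) :=
    (stronglyMeasurable_const.indicator hT_m₂).mul (stronglyMeasurable_const.indicator hC_m₂)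
  have hCφ_meas : StronglyMeasurable[m₃] (fC * φ) :=
    (stronglyMeasurable_const.indicator hC_m₃).mul (stronglyMeasurable_condExp.mono hX_m₃)
  have hφψ_meas : StronglyMeasurable[m] (φ * ψ) :=
    (stronglyMeasurable_condExp.mono hX_m).mul (stronglyMeasurable_condExp.mono hZ_m)
  have hT4_meas : StronglyMeasurable[m₄] fT := stronglyMeasurable_const.indicator hT_m₄
  have e3 : ((B ⁻¹' sB ∩ T₀ ⁻¹' sT) ∩ C ⁻¹' sC).indicator (fun ω => (1:ℝ)) = (fT * fC) * fB := by
    funext x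
    by_cases h1x : x ∈ B ⁻¹' sB <;> by_cases h2x : x ∈ T₀ ⁻¹' sT <;>
      by_cases h3x : x ∈ C ⁻¹' sC <;>
      simp [hfB_def, hfT_def, hfC_def, Set.indicator_apply, h1x, h2x, h3x, Set.mem_inter_iff]
  have e2 : (B ⁻¹' sB ∩ T₀ ⁻¹' sT).indicator (fun ω => (1:ℝ)) = fT * fB := by
    funext x
    by_cases h1x : x ∈ B ⁻¹' sB <;> by_cases h2x : x ∈ T₀ ⁻¹' sT <;>
      simp [hfB_def, hfT_def, Set.indicator_apply, h1x, h2x, Set.mem_inter_iff]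
  have hR : (μ⟦B ⁻¹' sB ∩ T₀ ⁻¹' sT | m⟧) =ᵐ[μ] φ * ψ := by
    calc μ[(B ⁻¹' sB ∩ T₀ ⁻¹' sT).indicator (fun ω => (1:ℝ)) | m]
        = μ[fT * fB | m] := by rw [e2]
      _ =ᵐ[μ] μ[μ[fT * fB | m₄] | m] := (condExp_condExp_of_le hm_m₄ hm₄).symm
      _ =ᵐ[μ] μ[fT * φ | m] := condExp_congr_ae
          ((condExp_mul_of_stronglyMeasurable_left hT4_meas hfT_B hfB_int).trans
            (Filter.EventuallyEq.rfl.mul hφ4))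
      _ = μ[φ * fT | m] := by rw [mul_comm fT φ]
      _ =ᵐ[μ] φ * μ[fT | m] :=
          condExp_mul_of_stronglyMeasurable_left (stronglyMeasurable_condExp.mono hX_m) hφT hfT_int
      _ =ᵐ[μ] φ * ψ := Filter.EventuallyEq.rfl.mul hψm
  calc μ[((B ⁻¹' sB ∩ T₀ ⁻¹' sT) ∩ C ⁻¹' sC).indicator (fun ω => (1:ℝ)) | m]
      = μ[(fT * fC) * fB | m] := by rw [e3]
    _ =ᵐ[μ] μ[μ[(fT * fC) * fB | m₂] | m] := (condExp_condExp_of_le hm_m₂ hm₂).symm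
    _ =ᵐ[μ] μ[(fT * fC) * φ | m] := condExp_congr_ae
        ((condExp_mul_of_stronglyMeasurable_left hTC_meas hfTC_B hfB_int).trans
          (Filter.EventuallyEq.rfl.mul hφ2))
    _ = μ[(fC * φ) * fT | m] := by rw [show (fT * fC) * φ = (fC * φ) * fT by ring]
    _ =ᵐ[μ] μ[μ[(fC * φ) * fT | m₃] | m] := (condExp_condExp_of_le hm_m₃ hm₃).symm
    _ =ᵐ[μ] μ[(fC * φ) * ψ | m] := condExp_congr_ae
        ((condExp_mul_of_stronglyMeasurable_left hCφ_meas hfCφ_T hfT_int).trans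
          (Filter.EventuallyEq.rfl.mul hψ3))
    _ = μ[(φ * ψ) * fC | m] := by rw [show (fC * φ) * ψ = (φ * ψ) * fC by ring]
    _ =ᵐ[μ] (φ * ψ) * μ[fC | m] := condExp_mul_of_stronglyMeasurable_left hφψ_meas hφψC hfC_int
    _ =ᵐ[μ] (μ⟦B ⁻¹' sB ∩ T₀ ⁻¹' sT | m⟧) * (μ⟦C ⁻¹' sC | m⟧) :=
        hR.symm.mul Filter.EventuallyEq.rfl

end Rect


/-- Lemma 1 of the paper: in the mixture cure model, if `T₀ ⟂ (C, X) | Z` and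
`B ⟂ (C, T₀, Z) | X`, then the survival time `T` (equal to `T₀` for uncured
individuals, `B = true`, and to `∞` for cured individuals) and the censoring
time `C` are conditionally independent given `(X, Z)`. -/
theorem survival_censoring_cond_indep
    {Ω : Type*} [MeasurableSpace Ω] [StandardBorelSpace Ω]
    {p q : ℕ}
    (μ : Measure Ω) [IsProbabilityMeasure μ]
    (B : Ω → Bool) (T₀ C : Ω → ℝ) (X : Ω → (Fin p → ℝ)) (Z : Ω → (Fin q → ℝ))
    (hB : Measurable B) (hT₀ : Measurable T₀) (hC : Measurable C)
    (hX : Measurable X) (hZ : Measurable Z)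
    (hT₀nn : ∀ ω, 0 ≤ T₀ ω) (hCnn : ∀ ω, 0 ≤ C ω)
    (T : Ω → ENNReal)
    (hT : ∀ ω, T ω = if B ω then ENNReal.ofReal (T₀ ω) else (⊤ : ENNReal))
    (h1 : CondIndepFun (MeasurableSpace.comap Z inferInstance) hZ.comap_le
      T₀ (fun ω => (C ω, X ω)) μ)
    (h2 : CondIndepFun (MeasurableSpace.comap X inferInstance) hX.comap_le
      B (fun ω => (C ω, T₀ ω, Z ω)) μ) :
    CondIndepFun (MeasurableSpace.comap (fun ω => (X ω, Z ω)) inferInstance)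
      ((hX.prodMk hZ).comap_le) T C μ := by
  classical
  have hTm : Measurable T := by
    have hT' : T = fun ω => if B ω then ENNReal.ofReal (T₀ ω) else (⊤ : ENNReal) := funext hT
    rw [hT']
    exact Measurable.ite (hB (measurableSet_singleton true))
      (ENNReal.measurable_ofReal.comp hT₀) measurable_const
  rw [condIndepFun_iff _ _ T C hTm hC μ]
  rintro _ _ ⟨A, hA, rfl⟩ ⟨D, hD, rfl⟩
  set A₁ : Set ℝ := ENNReal.ofReal ⁻¹' A with hA₁_def
  set A₂ : Set ℝ := if (⊤ : ENNReal) ∈ A then Set.univ else ∅ with hA₂_def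
  have hA₁m : MeasurableSet A₁ := ENNReal.measurable_ofReal hA
  have hA₂m : MeasurableSet A₂ := by
    rw [hA₂_def]; split <;> simp
  have hdec : T ⁻¹' A = (B ⁻¹' {true} ∩ T₀ ⁻¹' A₁) ∪ (B ⁻¹' {false} ∩ T₀ ⁻¹' A₂) := by
    ext ω
    simp only [Set.mem_preimage, Set.mem_union, Set.mem_inter_iff, Set.mem_singleton_iff]
    rw [hT ω]
    cases hb : B ω
    · by_cases hinf : (⊤ : ENNReal) ∈ A <;> simp [hA₂_def, hinf, hb]
    · simp [hA₁_def, hb]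
  have hdisj : Disjoint (B ⁻¹' {true} ∩ T₀ ⁻¹' A₁) (B ⁻¹' {false} ∩ T₀ ⁻¹' A₂) := by
    rw [Set.disjoint_left]
    rintro ω ⟨hω1, -⟩ ⟨hω2, -⟩
    simp only [Set.mem_preimage, Set.mem_singleton_iff] at hω1 hω2
    rw [hω1] at hω2
    exact Bool.noConfusion hω2
  have hdisj' : Disjoint ((B ⁻¹' {true} ∩ T₀ ⁻¹' A₁) ∩ C ⁻¹' D)
      ((B ⁻¹' {false} ∩ T₀ ⁻¹' A₂) ∩ C ⁻¹' D) :=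
    hdisj.mono Set.inter_subset_left Set.inter_subset_left
  have k₁ := key_rect (m := MeasurableSpace.comap (fun ω => (X ω, Z ω)) inferInstance)
    hB hT₀ hC hX hZ h1 h2 rfl rfl rfl rfl rfl rfl
    (measurableSet_singleton true) hA₁m hD
  have k₂ := key_rect (m := MeasurableSpace.comap (fun ω => (X ω, Z ω)) inferInstance)
    hB hT₀ hC hX hZ h1 h2 rfl rfl rfl rfl rfl rfl
    (measurableSet_singleton false) hA₂m hD
  set s₁ := B ⁻¹' {true} ∩ T₀ ⁻¹' A₁ with hs₁_def
  set s₂ := B ⁻¹' {false} ∩ T₀ ⁻¹' A₂ with hs₂_def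
  have hs₁m : MeasurableSet s₁ := (hB (measurableSet_singleton true)).inter (hT₀ hA₁m)
  have hs₂m : MeasurableSet s₂ := (hB (measurableSet_singleton false)).inter (hT₀ hA₂m)
  have hCDm : MeasurableSet (C ⁻¹' D) := hC hD
  have hind_split : ((s₁ ∪ s₂) ∩ C ⁻¹' D).indicator (fun ω => (1:ℝ))
      = (s₁ ∩ C ⁻¹' D).indicator (fun ω => (1:ℝ)) + (s₂ ∩ C ⁻¹' D).indicator (fun ω => (1:ℝ)) := by
    rw [Set.union_inter_distrib_right, Set.indicator_union_of_disjoint hdisj']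
    rfl
  have hsplit2 : (s₁ ∪ s₂).indicator (fun ω => (1:ℝ))
      = s₁.indicator (fun ω => (1:ℝ)) + s₂.indicator (fun ω => (1:ℝ)) := by
    rw [Set.indicator_union_of_disjoint hdisj]
    rfl
  have hi₁ : Integrable ((s₁ ∩ C ⁻¹' D).indicator (fun ω => (1:ℝ))) μ :=
    (integrable_const (1:ℝ)).indicator (hs₁m.inter hCDm)
  have hi₂ : Integrable ((s₂ ∩ C ⁻¹' D).indicator (fun ω => (1:ℝ))) μ :=
    (integrable_const (1:ℝ)).indicator (hs₂m.inter hCDm)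
  have hj₁ : Integrable (s₁.indicator (fun ω => (1:ℝ))) μ :=
    (integrable_const (1:ℝ)).indicator hs₁m
  have hj₂ : Integrable (s₂.indicator (fun ω => (1:ℝ))) μ :=
    (integrable_const (1:ℝ)).indicator hs₂m
  set m := MeasurableSpace.comap (fun ω => (X ω, Z ω)) inferInstance with hm_def
  rw [hdec]
  calc μ[((s₁ ∪ s₂) ∩ C ⁻¹' D).indicator (fun ω => (1:ℝ)) | m]
      = μ[(s₁ ∩ C ⁻¹' D).indicator (fun ω => (1:ℝ))
          + (s₂ ∩ C ⁻¹' D).indicator (fun ω => (1:ℝ)) | m] := by rw [hind_split]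
    _ =ᵐ[μ] μ[(s₁ ∩ C ⁻¹' D).indicator (fun ω => (1:ℝ)) | m]
          + μ[(s₂ ∩ C ⁻¹' D).indicator (fun ω => (1:ℝ)) | m] := condExp_add hi₁ hi₂ m
    _ =ᵐ[μ] (μ⟦s₁ | m⟧) * (μ⟦C ⁻¹' D | m⟧) + (μ⟦s₂ | m⟧) * (μ⟦C ⁻¹' D | m⟧) := k₁.add k₂
    _ = ((μ⟦s₁ | m⟧) + (μ⟦s₂ | m⟧)) * (μ⟦C ⁻¹' D | m⟧) := by rw [add_mul]
    _ =ᵐ[μ] (μ[s₁.indicator (fun ω => (1:ℝ)) + s₂.indicator (fun ω => (1:ℝ)) | m])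
          * (μ⟦C ⁻¹' D | m⟧) := ((condExp_add hj₁ hj₂ m).symm).mul Filter.EventuallyEq.rfl
    _ = (μ⟦s₁ ∪ s₂ | m⟧) * (μ⟦C ⁻¹' D | m⟧) := by rw [← hsplit2]
end

section
/- (Theorem 1: strong consistency of the presmoothed incidence estimator.) Let γ̂ₙ : Ω → G be any functions such that for every ω ∈ Ω and every n ≥ 1, γ̂ₙ(ω) maximizes γ ↦ log L̂_{n,1}(γ)(ω) over G. Then γ̂ₙ → γ₀ almost surely. -/
open MeasureTheory ProbabilityTheory Filter

section Aux

/-- Lipschitz bound for `log` on `[ε, ∞)`. -/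
private lemma presmooth_log_lip {ε u v : ℝ} (hε : 0 < ε) (hu : ε ≤ u) (hv : ε ≤ v) :
    |Real.log u - Real.log v| ≤ |u - v| / ε := by
  wlog h : v ≤ u generalizing u v
  · rw [abs_sub_comm, abs_sub_comm u v]; exact this hv hu (le_of_not_ge h)
  have hv0 : 0 < v := lt_of_lt_of_le hε hv
  have hu0 : 0 < u := lt_of_lt_of_le hε hu
  have hlog : Real.log u - Real.log v = Real.log (u / v) := by
    rw [Real.log_div (by positivity) (by positivity)]
  rw [abs_of_nonneg (by rw [hlog]; exact Real.log_nonneg (by rw [le_div_iff₀ hv0]; linarith)),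
    abs_of_nonneg (by linarith), hlog]
  have h1 := Real.log_le_sub_one_of_pos (x := u / v) (by positivity)
  have h2 : u / v - 1 = (u - v) / v := by field_simp
  calc Real.log (u / v) ≤ (u - v) / v := by linarith [h2 ▸ h1]
    _ ≤ (u - v) / ε := div_le_div_of_nonneg_left (by linarith) hε hv

/-- Gibbs-type inequality: nonnegativity of the binary KL divergence. -/
private lemma presmooth_kl_nonneg {p q : ℝ} (hp0 : 0 < p) (hp1 : p < 1) (hq0 : 0 < q) (hq1 : q < 1) :
    0 ≤ p * (Real.log p - Real.log q) + (1 - p) * (Real.log (1 - p) - Real.log (1 - q)) := by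
  have hp1' : (0:ℝ) < 1 - p := by linarith
  have hq1' : (0:ℝ) < 1 - q := by linarith
  have h1 : Real.log q - Real.log p ≤ q / p - 1 := by
    rw [← Real.log_div (by positivity) (by positivity)]
    exact Real.log_le_sub_one_of_pos (by positivity)
  have h2 : Real.log (1 - q) - Real.log (1 - p) ≤ (1 - q) / (1 - p) - 1 := by
    rw [← Real.log_div (by positivity) (by positivity)]
    exact Real.log_le_sub_one_of_pos (by positivity)
  have h1' : p * (Real.log q - Real.log p) ≤ q - p := by
    calc p * (Real.log q - Real.log p) ≤ p * (q / p - 1) :=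
      mul_le_mul_of_nonneg_left h1 hp0.le
      _ = q - p := by field_simp
  have h2' : (1 - p) * (Real.log (1 - q) - Real.log (1 - p)) ≤ p - q := by
    calc (1 - p) * (Real.log (1 - q) - Real.log (1 - p))
        ≤ (1 - p) * ((1 - q) / (1 - p) - 1) := mul_le_mul_of_nonneg_left h2 hp1'.le
      _ = p - q := by field_simp; ring
  nlinarith [h1', h2']

/-- Equality case of the Gibbs inequality. -/
private lemma presmooth_kl_eq_zero {p q : ℝ} (hp0 : 0 < p) (hp1 : p < 1) (hq0 : 0 < q) (hq1 : q < 1)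
    (h : p * (Real.log p - Real.log q) + (1 - p) * (Real.log (1 - p) - Real.log (1 - q)) = 0) :
    q = p := by
  have hp1' : (0:ℝ) < 1 - p := by linarith
  have hq1' : (0:ℝ) < 1 - q := by linarith
  by_contra hne
  have h1 : Real.log q - Real.log p < q / p - 1 := by
    rw [← Real.log_div (by positivity) (by positivity)]
    refine Real.log_lt_sub_one_of_pos (by positivity) ?_
    intro hdq; exact hne (by field_simp at hdq; linarith)
  have h2 : Real.log (1 - q) - Real.log (1 - p) ≤ (1 - q) / (1 - p) - 1 := by
    rw [← Real.log_div (by positivity) (by positivity)]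
    exact Real.log_le_sub_one_of_pos (by positivity)
  have h1' : p * (Real.log q - Real.log p) < q - p := by
    calc p * (Real.log q - Real.log p) < p * (q / p - 1) := mul_lt_mul_of_pos_left h1 hp0
      _ = q - p := by field_simp
  have h2' : (1 - p) * (Real.log (1 - q) - Real.log (1 - p)) ≤ p - q := by
    calc (1 - p) * (Real.log (1 - q) - Real.log (1 - p))
        ≤ (1 - p) * ((1 - q) / (1 - p) - 1) := mul_le_mul_of_nonneg_left h2 hp1'.le
      _ = p - q := by field_simp; ring
  nlinarith [h1', h2']
end Aux

/-- Theorem 1 of the paper: strong consistency of the presmoothed incidence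
estimator.  If `γ̂ₙ` maximizes the presmoothed logistic-type log-likelihood
`log L̂_{n,1}` over the compact parameter set `G`, then under (AC1)–(AC4) and
the identifiability condition, `γ̂ₙ → γ₀` almost surely. -/
theorem presmoothing_consistency
    {Ω : Type*} [MeasurableSpace Ω] (μ : Measure Ω) [IsProbabilityMeasure μ]
    {p : ℕ} (𝒳 : Set (Fin p → ℝ)) (h𝒳 : MeasurableSet 𝒳)
    (X : ℕ → Ω → (Fin p → ℝ))
    (hXmeas : ∀ i, Measurable (X i))
    (hXval : ∀ i ω, X i ω ∈ 𝒳)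
    (hindep : iIndepFun X μ)
    (hident : ∀ i, Measure.map (X i) μ = Measure.map (X 0) μ)
    (G : Set (Fin p → ℝ)) (hG : IsCompact G)
    (γ₀ : Fin p → ℝ) (hγ₀ : γ₀ ∈ G)
    (φ : (Fin p → ℝ) → (Fin p → ℝ) → ℝ)
    (hφmeas : ∀ γ ∈ G, Measurable (φ γ))
    -- (AC3): Hölder continuity in the parameter, uniformly over `𝒳`
    (hAC3 : ∃ a > (0 : ℝ), ∃ c > (0 : ℝ), ∀ γ₁ ∈ G, ∀ γ₂ ∈ G, ∀ x ∈ 𝒳,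
      |φ γ₁ x - φ γ₂ x| ≤ c * ‖γ₁ - γ₂‖ ^ a)
    -- (AC4): `φ` is bounded away from `0` and `1` on `G × 𝒳`
    (hAC4 : ∃ ε > (0 : ℝ), ∀ γ ∈ G, ∀ x ∈ 𝒳, ε ≤ φ γ x ∧ φ γ x ≤ 1 - ε)
    -- identifiability: `ℙ(φ(γ, X₁) = φ(γ̃, X₁)) = 1` implies `γ = γ̃`
    (hid : ∀ γ ∈ G, ∀ γ' ∈ G,
      (∀ᵐ ω ∂μ, φ γ (X 0 ω) = φ γ' (X 0 ω)) → γ = γ')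
    -- the preliminary nonparametric estimators `π̂ₙ`, with values in `[0, 1]`
    (πhat : ℕ → Ω → (Fin p → ℝ) → ℝ)
    (hπmeas : ∀ n, Measurable (Function.uncurry (πhat n)))
    (hπrange : ∀ n ω x, πhat n ω x ∈ Set.Icc (0 : ℝ) 1)
    -- (AC1): `sup_{x ∈ 𝒳} |π̂ₙ(x) − π₀(x)| → 0` almost surely, `π₀ = 1 − φ(γ₀, ·)`
    (hAC1 : ∀ᵐ ω ∂μ, TendstoUniformlyOn (fun n x => πhat n ω x)
      (fun x => 1 - φ γ₀ x) atTop 𝒳)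
    -- `γ̂ₙ` maximizes `log L̂_{n,1}` over `G`
    (γhat : ℕ → Ω → (Fin p → ℝ))
    (hγhatG : ∀ n ω, γhat n ω ∈ G)
    (hmax : ∀ (n : ℕ), 1 ≤ n → ∀ ω, ∀ γ ∈ G,
      (∑ i ∈ Finset.range n,
        ((1 - πhat n ω (X i ω)) * Real.log (φ γ (X i ω))
          + πhat n ω (X i ω) * Real.log (1 - φ γ (X i ω))))
      ≤ ∑ i ∈ Finset.range n,
        ((1 - πhat n ω (X i ω)) * Real.log (φ (γhat n ω) (X i ω))
          + πhat n ω (X i ω) * Real.log (1 - φ (γhat n ω) (X i ω)))) :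
    ∀ᵐ ω ∂μ, Tendsto (fun n => γhat n ω) atTop (nhds γ₀) := by
  classical
  obtain ⟨a, ha, c, hc, hAC3⟩ := hAC3
  obtain ⟨ε, hε, hAC4⟩ := hAC4
  -- the sample space is nonempty, hence `𝒳` is nonempty and `ε ≤ 1/2`
  have hΩ : Nonempty Ω := by
    by_contra h
    rw [not_nonempty_iff] at h
    have h1 := measure_univ (μ := μ)
    rw [Set.univ_eq_empty_iff.mpr h, measure_empty] at h1
    exact zero_ne_one h1
  obtain ⟨ω₀⟩ := hΩ
  have hε2 : ε ≤ 1/2 := by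
    have h := hAC4 γ₀ hγ₀ _ (hXval 0 ω₀); linarith [h.1, h.2]
  have hε1 : ε < 1 := by linarith
  set B : ℝ := -Real.log ε with hBdef
  have hB0 : 0 < B := by
    have := Real.log_neg hε hε1; simp only [hBdef]; linarith
  -- the limiting criterion integrand
  set f : (Fin p → ℝ) → (Fin p → ℝ) → ℝ :=
    fun γ x => φ γ₀ x * Real.log (φ γ x) + (1 - φ γ₀ x) * Real.log (1 - φ γ x) with hfdef
  -- basic bounds
  have hlogB : ∀ u : ℝ, ε ≤ u → u ≤ 1 → |Real.log u| ≤ B := by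
    intro u hu hu1
    have h0 : Real.log u ≤ 0 := Real.log_nonpos (by linarith) hu1
    have h1 : Real.log ε ≤ Real.log u := Real.log_le_log hε hu
    rw [abs_of_nonpos h0]; simp only [hBdef]; linarith
  have hφb : ∀ γ ∈ G, ∀ x ∈ 𝒳, ε ≤ φ γ x ∧ φ γ x ≤ 1 - ε := hAC4
  have hfB : ∀ γ ∈ G, ∀ x ∈ 𝒳, |f γ x| ≤ B := by
    intro γ hγ x hx
    obtain ⟨h1, h2⟩ := hAC4 γ hγ x hx
    obtain ⟨h3, h4⟩ := hAC4 γ₀ hγ₀ x hx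
    have hw0 : 0 ≤ φ γ₀ x := by linarith
    have hw1 : 0 ≤ 1 - φ γ₀ x := by linarith
    have hl1 : |Real.log (φ γ x)| ≤ B := hlogB _ h1 (by linarith)
    have hl2 : |Real.log (1 - φ γ x)| ≤ B := hlogB _ (by linarith) (by linarith)
    calc |f γ x| ≤ |φ γ₀ x * Real.log (φ γ x)| + |(1 - φ γ₀ x) * Real.log (1 - φ γ x)| :=
          abs_add_le _ _
      _ = φ γ₀ x * |Real.log (φ γ x)| + (1 - φ γ₀ x) * |Real.log (1 - φ γ x)| := by
          rw [abs_mul, abs_mul, abs_of_nonneg hw0, abs_of_nonneg hw1]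
      _ ≤ φ γ₀ x * B + (1 - φ γ₀ x) * B := by
          gcongr
      _ = B := by ring
  -- measurability and integrability
  have hfmeas : ∀ γ ∈ G, Measurable (f γ) := by
    intro γ hγ
    exact ((hφmeas γ₀ hγ₀).mul (Real.measurable_log.comp (hφmeas γ hγ))).add
      (((measurable_const.sub (hφmeas γ₀ hγ₀))).mul
        (Real.measurable_log.comp (measurable_const.sub (hφmeas γ hγ))))
  have hint : ∀ γ ∈ G, ∀ i, Integrable (fun ω => f γ (X i ω)) μ := by
    intro γ hγ i
    refine (integrable_const B).mono'
      (((hfmeas γ hγ).comp (hXmeas i)).aestronglyMeasurable) ?_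
    exact ae_of_all _ fun ω => by
      simpa using hfB γ hγ _ (hXval i ω)
  set M : (Fin p → ℝ) → ℝ := fun γ => ∫ ω, f γ (X 0 ω) ∂μ with hMdef
  -- SLLN at a fixed parameter value
  have hSLLN : ∀ γ ∈ G, ∀ᵐ ω ∂μ,
      Tendsto (fun n : ℕ => (∑ i ∈ Finset.range n, f γ (X i ω)) / n) atTop (nhds (M γ)) := by
    intro γ hγ
    have hpair : Pairwise (Function.onFun (IndepFun · · μ) fun i ω => f γ (X i ω)) := by
      intro i j hij
      exact (hindep.indepFun hij).comp (hfmeas γ hγ) (hfmeas γ hγ)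
    have hidd : ∀ i, IdentDistrib (fun ω => f γ (X i ω)) (fun ω => f γ (X 0 ω)) μ μ := by
      intro i
      exact IdentDistrib.comp ⟨(hXmeas i).aemeasurable, (hXmeas 0).aemeasurable, hident i⟩
        (hfmeas γ hγ)
    exact strong_law_ae_real _ (hint γ hγ 0) hpair hidd
  -- Hölder continuity of `f` and of `M`
  set L : ℝ := 2 * c / ε with hLdef
  have hL0 : 0 < L := by positivity
  have hLf : ∀ γ₁ ∈ G, ∀ γ₂ ∈ G, ∀ x ∈ 𝒳, |f γ₁ x - f γ₂ x| ≤ L * ‖γ₁ - γ₂‖ ^ a := by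
    intro γ₁ hγ₁ γ₂ hγ₂ x hx
    obtain ⟨h1, h2⟩ := hAC4 γ₁ hγ₁ x hx
    obtain ⟨h3, h4⟩ := hAC4 γ₂ hγ₂ x hx
    obtain ⟨h5, h6⟩ := hAC4 γ₀ hγ₀ x hx
    have hd := hAC3 γ₁ hγ₁ γ₂ hγ₂ x hx
    have hpow : 0 ≤ ‖γ₁ - γ₂‖ ^ a := Real.rpow_nonneg (norm_nonneg _) a
    have hΔ1 : |Real.log (φ γ₁ x) - Real.log (φ γ₂ x)| ≤ (c * ‖γ₁ - γ₂‖ ^ a) / ε := by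
      refine le_trans (presmooth_log_lip hε h1 h3) ?_
      gcongr
    have hΔ2 : |Real.log (1 - φ γ₁ x) - Real.log (1 - φ γ₂ x)| ≤ (c * ‖γ₁ - γ₂‖ ^ a) / ε := by
      refine le_trans (presmooth_log_lip hε (by linarith) (by linarith)) ?_
      have habs : |1 - φ γ₁ x - (1 - φ γ₂ x)| = |φ γ₁ x - φ γ₂ x| := by
        rw [show (1 - φ γ₁ x - (1 - φ γ₂ x)) = -(φ γ₁ x - φ γ₂ x) by ring, abs_neg]
      rw [habs]; gcongr
    have heq : f γ₁ x - f γ₂ x =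
        φ γ₀ x * (Real.log (φ γ₁ x) - Real.log (φ γ₂ x))
          + (1 - φ γ₀ x) * (Real.log (1 - φ γ₁ x) - Real.log (1 - φ γ₂ x)) := by
      simp only [hfdef]; ring
    rw [heq]
    calc |φ γ₀ x * (Real.log (φ γ₁ x) - Real.log (φ γ₂ x))
          + (1 - φ γ₀ x) * (Real.log (1 - φ γ₁ x) - Real.log (1 - φ γ₂ x))|
        ≤ |φ γ₀ x * (Real.log (φ γ₁ x) - Real.log (φ γ₂ x))|
          + |(1 - φ γ₀ x) * (Real.log (1 - φ γ₁ x) - Real.log (1 - φ γ₂ x))| := abs_add_le _ _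
      _ = φ γ₀ x * |Real.log (φ γ₁ x) - Real.log (φ γ₂ x)|
          + (1 - φ γ₀ x) * |Real.log (1 - φ γ₁ x) - Real.log (1 - φ γ₂ x)| := by
          rw [abs_mul, abs_mul, abs_of_nonneg (show (0:ℝ) ≤ φ γ₀ x by linarith),
            abs_of_nonneg (show (0:ℝ) ≤ 1 - φ γ₀ x by linarith)]
      _ ≤ φ γ₀ x * ((c * ‖γ₁ - γ₂‖ ^ a) / ε) + (1 - φ γ₀ x) * ((c * ‖γ₁ - γ₂‖ ^ a) / ε) := by
          gcongr <;> linarith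
      _ = (c * ‖γ₁ - γ₂‖ ^ a) / ε := by ring
      _ ≤ L * ‖γ₁ - γ₂‖ ^ a := by
          rw [show L * ‖γ₁ - γ₂‖ ^ a = (2 * c * ‖γ₁ - γ₂‖ ^ a) / ε by rw [hLdef]; ring]
          gcongr
          nlinarith
  have hLM : ∀ γ₁ ∈ G, ∀ γ₂ ∈ G, |M γ₁ - M γ₂| ≤ L * ‖γ₁ - γ₂‖ ^ a := by
    intro γ₁ hγ₁ γ₂ hγ₂
    have hsub : M γ₁ - M γ₂ = ∫ ω, (f γ₁ (X 0 ω) - f γ₂ (X 0 ω)) ∂μ :=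
      (integral_sub (hint γ₁ hγ₁ 0) (hint γ₂ hγ₂ 0)).symm
    have hb := norm_integral_le_of_norm_le_const (μ := μ)
      (f := fun ω => f γ₁ (X 0 ω) - f γ₂ (X 0 ω)) (C := L * ‖γ₁ - γ₂‖ ^ a)
      (ae_of_all _ fun ω => by
        simpa [Real.norm_eq_abs] using hLf γ₁ hγ₁ γ₂ hγ₂ _ (hXval 0 ω))
    simp only [probReal_univ, measure_univ, ENNReal.toReal_one, mul_one, Real.norm_eq_abs] at hb
    rw [hsub]
    exact hb
  -- rpow facts
  have hrpow0 : Tendsto (fun t : ℝ => L * t ^ a) (nhds 0) (nhds 0) := by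
    have h1 := (Real.continuousAt_rpow_const 0 a (Or.inr ha.le)).tendsto
    rw [Real.zero_rpow (ne_of_gt ha)] at h1
    have h2 : Tendsto (fun t : ℝ => L * t ^ a) (nhds 0) (nhds (L * 0)) :=
      tendsto_const_nhds.mul h1
    simpa using h2
  -- continuity of M on G
  have hMcont : ContinuousOn M G := by
    intro γ hγ
    have h1 : Tendsto (fun γ' : Fin p → ℝ => ‖γ' - γ‖) (nhdsWithin γ G) (nhds 0) := by
      have hcont : Continuous fun γ' : Fin p → ℝ => ‖γ' - γ‖ :=
        (continuous_id.sub continuous_const).norm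
      have h2 := hcont.tendsto γ
      simp only [sub_self, norm_zero] at h2
      exact h2.mono_left nhdsWithin_le_nhds
    have h2 : Tendsto (fun γ' => dist (M γ') (M γ)) (nhdsWithin γ G) (nhds 0) := by
      refine squeeze_zero' (Filter.Eventually.of_forall fun _ => dist_nonneg) ?_
        (hrpow0.comp h1)
      filter_upwards [self_mem_nhdsWithin] with γ' hγ'
      rw [Real.dist_eq]
      exact hLM γ' hγ' γ hγ
    show Tendsto M (nhdsWithin γ G) (nhds (M γ))
    exact tendsto_iff_dist_tendsto_zero.mpr h2
  -- Gibbs inequality: γ₀ maximizes M strictly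
  have hkey : ∀ γ ∈ G, ∀ ω, 0 ≤ f γ₀ (X 0 ω) - f γ (X 0 ω) := by
    intro γ hγ ω
    set x := X 0 ω with hxdef
    obtain ⟨h1, h2⟩ := hAC4 γ hγ x (hXval 0 ω)
    obtain ⟨h3, h4⟩ := hAC4 γ₀ hγ₀ x (hXval 0 ω)
    have hkl := presmooth_kl_nonneg (p := φ γ₀ x) (q := φ γ x)
      (by linarith) (by linarith) (by linarith) (by linarith)
    have heq : f γ₀ x - f γ x =
        φ γ₀ x * (Real.log (φ γ₀ x) - Real.log (φ γ x))
          + (1 - φ γ₀ x) * (Real.log (1 - φ γ₀ x) - Real.log (1 - φ γ x)) := by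
      simp only [hfdef]; ring
    linarith [heq ▸ hkl]
  have hGle : ∀ γ ∈ G, M γ ≤ M γ₀ := by
    intro γ hγ
    have hsub : M γ₀ - M γ = ∫ ω, (f γ₀ (X 0 ω) - f γ (X 0 ω)) ∂μ :=
      (integral_sub (hint γ₀ hγ₀ 0) (hint γ hγ 0)).symm
    have h0 : 0 ≤ M γ₀ - M γ := by
      rw [hsub]; exact integral_nonneg fun ω => hkey γ hγ ω
    linarith
  have hGeq : ∀ γ ∈ G, M γ = M γ₀ → γ = γ₀ := by
    intro γ hγ heqM
    have hsub : M γ₀ - M γ = ∫ ω, (f γ₀ (X 0 ω) - f γ (X 0 ω)) ∂μ :=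
      (integral_sub (hint γ₀ hγ₀ 0) (hint γ hγ 0)).symm
    have hzero : ∫ ω, (f γ₀ (X 0 ω) - f γ (X 0 ω)) ∂μ = 0 := by
      rw [← hsub, heqM]; ring
    have hae := (integral_eq_zero_iff_of_nonneg (fun ω => hkey γ hγ ω)
      ((hint γ₀ hγ₀ 0).sub (hint γ hγ 0))).mp hzero
    refine hid γ hγ γ₀ hγ₀ ?_
    filter_upwards [hae] with ω hω
    simp only [Pi.zero_apply] at hω
    set x := X 0 ω with hxdef
    obtain ⟨h1, h2⟩ := hAC4 γ hγ x (hXval 0 ω)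
    obtain ⟨h3, h4⟩ := hAC4 γ₀ hγ₀ x (hXval 0 ω)
    have heq : f γ₀ x - f γ x =
        φ γ₀ x * (Real.log (φ γ₀ x) - Real.log (φ γ x))
          + (1 - φ γ₀ x) * (Real.log (1 - φ γ₀ x) - Real.log (1 - φ γ x)) := by
      simp only [hfdef]; ring
    exact presmooth_kl_eq_zero (p := φ γ₀ x) (q := φ γ x)
      (by linarith) (by linarith) (by linarith) (by linarith) (by rw [← heq]; exact hω)
  -- separation
  have hsep : ∀ η > (0:ℝ), ∃ d > (0:ℝ), ∀ γ ∈ G, η ≤ dist γ γ₀ → M γ ≤ M γ₀ - d := by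
    intro η hη
    set K := G ∩ {γ | η ≤ dist γ γ₀} with hKdef
    have hKc : IsCompact K :=
      hG.inter_right (isClosed_le continuous_const (continuous_id.dist continuous_const))
    rcases Set.eq_empty_or_nonempty K with hKe | hKne
    · refine ⟨1, one_pos, fun γ hγ hdist => ?_⟩
      exact absurd (show γ ∈ K from ⟨hγ, hdist⟩) (by rw [hKe]; exact Set.notMem_empty γ)
    · obtain ⟨γs, hγsK, hmaxs⟩ := hKc.exists_isMaxOn hKne (hMcont.mono Set.inter_subset_left)
      have hγsG : γs ∈ G := hγsK.1
      have hne : γs ≠ γ₀ := by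
        intro h
        have h2 : η ≤ dist γs γ₀ := hγsK.2
        rw [h, dist_self] at h2
        linarith
      have hlt : M γs < M γ₀ :=
        lt_of_le_of_ne (hGle γs hγsG) (fun h => hne (hGeq γs hγsG h))
      refine ⟨M γ₀ - M γs, by linarith, fun γ hγ hd => ?_⟩
      have h3 : M γ ≤ M γs := hmaxs ⟨hγ, hd⟩
      linarith
  -- uniform strong law over G
  have hULLN : ∀ᵐ ω ∂μ, ∀ δ > (0:ℝ), ∀ᶠ n in atTop, ∀ γ ∈ G,
      |(∑ i ∈ Finset.range n, f γ (X i ω)) / n - M γ| ≤ δ := by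
    have hnet : ∀ k : ℕ, ∃ T : Set (Fin p → ℝ), T ⊆ G ∧ T.Finite ∧
        G ⊆ ⋃ t ∈ T, Metric.ball t (1/(k+1)) := fun k =>
      hG.finite_cover_balls (by positivity)
    choose T hTG hTfin hTcov using hnet
    have hAS : ∀ᵐ ω ∂μ, ∀ k : ℕ, ∀ t ∈ T k,
        Tendsto (fun n : ℕ => (∑ i ∈ Finset.range n, f t (X i ω)) / n) atTop (nhds (M t)) := by
      rw [ae_all_iff]
      intro k
      rw [ae_ball_iff (hTfin k).countable]
      intro t ht
      exact hSLLN t (hTG k ht)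
    filter_upwards [hAS] with ω hω
    intro δ hδ
    obtain ⟨k, hkδ⟩ : ∃ k : ℕ, L * (1/(k+1:ℝ)) ^ a < δ/3 := by
      have h1 : Tendsto (fun k : ℕ => L * (1/(k+1:ℝ)) ^ a) atTop (nhds 0) :=
        hrpow0.comp tendsto_one_div_add_atTop_nhds_zero_nat
      exact (h1.eventually_lt_const (by linarith : (0:ℝ) < δ/3)).exists
    have hev : ∀ᶠ n in atTop, ∀ t ∈ T k,
        |(∑ i ∈ Finset.range n, f t (X i ω)) / n - M t| < δ/3 := by
      rw [eventually_all_finite (hTfin k)]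
      intro t ht
      have h2 := tendsto_iff_dist_tendsto_zero.mp (hω k t ht)
      have h3 := h2.eventually_lt_const (by linarith : (0:ℝ) < δ/3)
      simpa [Real.dist_eq] using h3
    filter_upwards [hev, eventually_ge_atTop 1] with n hn hn1
    intro γ hγ
    obtain ⟨t, ht, hdist⟩ : ∃ t ∈ T k, dist γ t < 1/(k+1) := by
      have h4 := hTcov k hγ
      simpa [Set.mem_iUnion, Metric.mem_ball] using h4
    have htG : t ∈ G := hTG k ht
    have hfrac : (0:ℝ) < 1/(k+1:ℝ) := by positivity
    have hpow : ‖γ - t‖ ^ a ≤ (1/(k+1:ℝ)) ^ a :=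
      Real.rpow_le_rpow (norm_nonneg _) (by rw [← dist_eq_norm]; exact hdist.le) ha.le
    have hterm : ∀ i, |f γ (X i ω) - f t (X i ω)| ≤ L * (1/(k+1:ℝ)) ^ a := fun i =>
      le_trans (hLf γ hγ t htG _ (hXval i ω)) (mul_le_mul_of_nonneg_left hpow hL0.le)
    have hn0 : (0:ℝ) < n := by
      have : (1:ℝ) ≤ n := by exact_mod_cast hn1
      linarith
    have hSdiff : |(∑ i ∈ Finset.range n, f γ (X i ω)) / n
        - (∑ i ∈ Finset.range n, f t (X i ω)) / n| ≤ L * (1/(k+1:ℝ)) ^ a := by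
      rw [div_sub_div_same, ← Finset.sum_sub_distrib, abs_div,
        abs_of_nonneg (Nat.cast_nonneg n : (0:ℝ) ≤ n), div_le_iff₀ hn0]
      calc |∑ i ∈ Finset.range n, (f γ (X i ω) - f t (X i ω))|
          ≤ ∑ i ∈ Finset.range n, |f γ (X i ω) - f t (X i ω)| :=
            Finset.abs_sum_le_sum_abs _ _
        _ ≤ ∑ _i ∈ Finset.range n, L * (1/(k+1:ℝ)) ^ a :=
            Finset.sum_le_sum fun i _ => hterm i
        _ = L * (1/(k+1:ℝ)) ^ a * n := by
            rw [Finset.sum_const, Finset.card_range, nsmul_eq_mul]; ring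
    have hMdiff : |M t - M γ| ≤ L * (1/(k+1:ℝ)) ^ a := by
      refine le_trans (hLM t htG γ hγ) ?_
      have h5 : ‖t - γ‖ = ‖γ - t‖ := norm_sub_rev t γ
      rw [h5]
      exact mul_le_mul_of_nonneg_left hpow hL0.le
    have hnet' := hn t ht
    calc |(∑ i ∈ Finset.range n, f γ (X i ω)) / n - M γ|
        ≤ |(∑ i ∈ Finset.range n, f γ (X i ω)) / n
            - (∑ i ∈ Finset.range n, f t (X i ω)) / n|
          + |(∑ i ∈ Finset.range n, f t (X i ω)) / n - M t| + |M t - M γ| := by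
          have := abs_sub_le ((∑ i ∈ Finset.range n, f γ (X i ω)) / n)
            ((∑ i ∈ Finset.range n, f t (X i ω)) / n) (M γ)
          have h6 := abs_sub_le ((∑ i ∈ Finset.range n, f t (X i ω)) / n) (M t) (M γ)
          linarith
      _ ≤ δ := by linarith
  -- conclusion
  filter_upwards [hULLN, hAC1] with ω hU hA
  rw [Metric.tendsto_atTop]
  intro η hη
  obtain ⟨d, hd, hsepd⟩ := hsep η hη
  have hA' := Metric.tendstoUniformlyOn_iff.mp hA (d/(16*B)) (div_pos hd (by linarith))
  have hU' := hU (d/8) (by linarith)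
  obtain ⟨N, hN⟩ := Filter.eventually_atTop.mp ((hA'.and hU').and (eventually_ge_atTop 1))
  refine ⟨N, fun n hn => ?_⟩
  obtain ⟨⟨hA1, hU1⟩, hn1⟩ := hN n hn
  by_contra hcon
  push_neg at hcon
  have hγn := hγhatG n ω
  have hn0 : (0:ℝ) < n := by
    have : (1:ℝ) ≤ n := by exact_mod_cast hn1
    linarith
  -- presmoothing error is uniformly at most d/8
  have hπb : ∀ γ ∈ G,
      |(∑ i ∈ Finset.range n, ((1 - πhat n ω (X i ω)) * Real.log (φ γ (X i ω))
          + πhat n ω (X i ω) * Real.log (1 - φ γ (X i ω)))) / n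
        - (∑ i ∈ Finset.range n, f γ (X i ω)) / n| ≤ d/8 := by
    intro γ hγ
    have hterm : ∀ i, |((1 - πhat n ω (X i ω)) * Real.log (φ γ (X i ω))
        + πhat n ω (X i ω) * Real.log (1 - φ γ (X i ω))) - f γ (X i ω)| ≤ d/8 := by
      intro i
      set x := X i ω with hxdef
      obtain ⟨h1, h2⟩ := hAC4 γ hγ x (hXval i ω)
      have hl1 : |Real.log (φ γ x)| ≤ B := hlogB _ h1 (by linarith)
      have hl2 : |Real.log (1 - φ γ x)| ≤ B := hlogB _ (by linarith) (by linarith)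
      have hπ : |(1 - φ γ₀ x) - πhat n ω x| ≤ d/(16*B) := by
        have := hA1 x (hXval i ω)
        rw [Real.dist_eq] at this
        exact this.le
      have heq : ((1 - πhat n ω x) * Real.log (φ γ x)
          + πhat n ω x * Real.log (1 - φ γ x)) - f γ x
          = ((1 - φ γ₀ x) - πhat n ω x) * (Real.log (φ γ x) - Real.log (1 - φ γ x)) := by
        simp only [hfdef]; ring
      rw [heq, abs_mul]
      have hl3 : |Real.log (φ γ x) - Real.log (1 - φ γ x)| ≤ 2*B := by
        calc |Real.log (φ γ x) - Real.log (1 - φ γ x)|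
            ≤ |Real.log (φ γ x)| + |Real.log (1 - φ γ x)| := abs_sub _ _
          _ ≤ 2*B := by linarith
      calc |(1 - φ γ₀ x) - πhat n ω x| * |Real.log (φ γ x) - Real.log (1 - φ γ x)|
          ≤ (d/(16*B)) * (2*B) := by
            apply mul_le_mul hπ hl3 (abs_nonneg _) (div_nonneg hd.le (by linarith))
        _ = d/8 := by field_simp; ring
    rw [div_sub_div_same, ← Finset.sum_sub_distrib, abs_div,
      abs_of_nonneg (Nat.cast_nonneg n : (0:ℝ) ≤ n), div_le_iff₀ hn0]
    calc |∑ i ∈ Finset.range n, (((1 - πhat n ω (X i ω)) * Real.log (φ γ (X i ω))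
          + πhat n ω (X i ω) * Real.log (1 - φ γ (X i ω))) - f γ (X i ω))|
        ≤ ∑ i ∈ Finset.range n, |((1 - πhat n ω (X i ω)) * Real.log (φ γ (X i ω))
          + πhat n ω (X i ω) * Real.log (1 - φ γ (X i ω))) - f γ (X i ω)| :=
          Finset.abs_sum_le_sum_abs _ _
      _ ≤ ∑ _i ∈ Finset.range n, d/8 := Finset.sum_le_sum fun i _ => hterm i
      _ = d/8 * n := by rw [Finset.sum_const, Finset.card_range, nsmul_eq_mul]; ring
  -- the maximizer inequality divided by n
  have hmx := hmax n hn1 ω γ₀ hγ₀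
  have hmx' : (∑ i ∈ Finset.range n, ((1 - πhat n ω (X i ω)) * Real.log (φ γ₀ (X i ω))
          + πhat n ω (X i ω) * Real.log (1 - φ γ₀ (X i ω)))) / n
      ≤ (∑ i ∈ Finset.range n, ((1 - πhat n ω (X i ω)) * Real.log (φ (γhat n ω) (X i ω))
          + πhat n ω (X i ω) * Real.log (1 - φ (γhat n ω) (X i ω)))) / n := by
    gcongr
  obtain ⟨e1a, e1b⟩ := abs_le.mp (hU1 (γhat n ω) hγn)
  obtain ⟨e2a, e2b⟩ := abs_le.mp (hU1 γ₀ hγ₀)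
  obtain ⟨e3a, e3b⟩ := abs_le.mp (hπb (γhat n ω) hγn)
  obtain ⟨e4a, e4b⟩ := abs_le.mp (hπb γ₀ hγ₀)
  have hcontr := hsepd (γhat n ω) hγn hcon
  linarith
end

section
/- (Boundedness of the cumulative hazard estimator, Lemma 3.) Almost surely, sup_{n≥1} Λₙ(τ*) < ∞; that is, the sequence (Λₙ(τ*))_{n≥1} is almost surely bounded. -/
open MeasureTheory ProbabilityTheory Filter

lemma avg_div_le_aux {n : ℕ} (hn : 1 ≤ n) (f g : ℕ → ℝ) (L : ℝ) (hL : 0 < L)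
    (hf0 : ∀ i, f i = 0 ∨ f i = 1)
    (hden : ∀ i ∈ Finset.range n, f i = 1 → L ≤ g i) :
    (n:ℝ)⁻¹ * ∑ i ∈ Finset.range n, f i / g i ≤ 1 / L := by
  have hn0 : (0:ℝ) < n := by exact_mod_cast hn
  have h1 : ∀ i ∈ Finset.range n, f i / g i ≤ 1 / L := by
    intro i hi
    rcases hf0 i with h | h
    · rw [h, zero_div]; positivity
    · rw [h]; exact one_div_le_one_div_of_le hL (hden i hi h)
  calc (n:ℝ)⁻¹ * ∑ i ∈ Finset.range n, f i / g i
      ≤ (n:ℝ)⁻¹ * ∑ _i ∈ Finset.range n, (1/L) :=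
        mul_le_mul_of_nonneg_left (Finset.sum_le_sum h1) (by positivity)
    _ = 1 / L := by
        rw [Finset.sum_const, Finset.card_range, nsmul_eq_mul, ← mul_assoc,
          inv_mul_cancel₀ hn0.ne', one_mul]

/-- Lemma 3 of the paper: almost surely, `sup_{n ≥ 1} Λₙ(τ*) < ∞`, i.e. the
sequence of cumulative-hazard estimators evaluated at `τ*` is almost surely
bounded.  Here the data `(Yᵢ, Δᵢ, Zᵢ)` are i.i.d., `‖Zᵢ‖ ≤ m` a.s., `β̂ₙ`
takes values in the compact set `B`, the `ĝ` take values in `[0, 1]`, and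
`ℙ(τ* ≤ Y₁ ≤ τ₀, Δ₁ = 1) > 0`.  (In Lean, real division by `0` equals `0`,
which encodes the convention that a summand with zero denominator is `0`.) -/
theorem cumulative_hazard_estimator_bounded
    {Ω : Type*} [MeasurableSpace Ω] (μ : Measure Ω) [IsProbabilityMeasure μ]
    {q : ℕ} (m : ℝ) (hm : 0 < m)
    (Y Δ : ℕ → Ω → ℝ) (Z : ℕ → Ω → EuclideanSpace ℝ (Fin q))
    (hY : ∀ i, Measurable (Y i)) (hΔ : ∀ i, Measurable (Δ i))
    (hZ : ∀ i, Measurable (Z i))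
    (hΔ01 : ∀ i ω, Δ i ω = 0 ∨ Δ i ω = 1)
    (hZbdd : ∀ i, ∀ᵐ ω ∂μ, ‖Z i ω‖ ≤ m)
    (hindep : iIndepFun
      (fun i ω => (Y i ω, Δ i ω, Z i ω)) μ)
    (hident : ∀ i, Measure.map (fun ω => (Y i ω, Δ i ω, Z i ω)) μ
      = Measure.map (fun ω => (Y 0 ω, Δ 0 ω, Z 0 ω)) μ)
    (B : Set (EuclideanSpace ℝ (Fin q))) (hB : IsCompact B)
    (τstar τ₀ : ℝ) (hτ : τstar ≤ τ₀)
    (hpos : 0 < μ {ω | τstar ≤ Y 0 ω ∧ Y 0 ω ≤ τ₀ ∧ Δ 0 ω = 1})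
    (βhat : ℕ → Ω → EuclideanSpace ℝ (Fin q)) (hβhat : ∀ n ω, βhat n ω ∈ B)
    (ghat : ℕ → ℕ → Ω → ℝ) (hghat : ∀ n j ω, ghat n j ω ∈ Set.Icc (0 : ℝ) 1) :
    ∀ᵐ ω ∂μ, ∃ K : ℝ, ∀ n : ℕ, 1 ≤ n →
      ((n : ℝ)⁻¹ * ∑ i ∈ Finset.range n,
        (if Y i ω < τstar then Δ i ω else 0) /
          ((n : ℝ)⁻¹ * ∑ j ∈ Finset.range n,
            (if Y i ω ≤ Y j ω ∧ Y j ω ≤ τ₀ then (1 : ℝ) else 0)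
              * Real.exp (inner ℝ (βhat n ω) (Z j ω))
              * (Δ j ω + (1 - Δ j ω) * ghat n j ω)))
      ≤ K := by
  classical
  -- bound on B
  obtain ⟨C₀, hC₀⟩ := hB.isBounded.exists_norm_le
  set C : ℝ := max C₀ 0 with hCdef
  have hC : ∀ x ∈ B, ‖x‖ ≤ C := fun x hx => le_max_of_le_left (hC₀ x hx)
  have hC0 : (0:ℝ) ≤ C := le_max_right _ _
  set E : ℝ := Real.exp (C * m) with hEdef
  have hEpos : 0 < E := Real.exp_pos _
  -- the indicator process
  set W : ℕ → Ω → ℝ × ℝ × EuclideanSpace ℝ (Fin q) :=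
    fun i ω => (Y i ω, Δ i ω, Z i ω) with hWdef
  have hW : ∀ i, Measurable (W i) :=
    fun i => ((hY i).prodMk ((hΔ i).prodMk (hZ i)))
  set s : Set (ℝ × ℝ × EuclideanSpace ℝ (Fin q)) :=
    {p | τstar ≤ p.1 ∧ p.1 ≤ τ₀ ∧ p.2.1 = 1} with hsdef
  have hs : MeasurableSet s := by
    have : s = (fun p : ℝ × ℝ × EuclideanSpace ℝ (Fin q) => p.1) ⁻¹'
        (Set.Icc τstar τ₀) ∩ (fun p : ℝ × ℝ × EuclideanSpace ℝ (Fin q) => p.2.1) ⁻¹' {1} := by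
      ext p; simp [hsdef, Set.mem_Icc, and_assoc]
    rw [this]
    exact (measurable_fst measurableSet_Icc).inter
      ((measurable_fst.comp measurable_snd) (measurableSet_singleton 1))
  set f : ℝ × ℝ × EuclideanSpace ℝ (Fin q) → ℝ := s.indicator (fun _ => 1) with hfdef
  have hf : Measurable f := measurable_const.indicator hs
  set X : ℕ → Ω → ℝ :=
    fun i ω => if τstar ≤ Y i ω ∧ Y i ω ≤ τ₀ ∧ Δ i ω = 1 then 1 else 0 with hXdef
  have hXeq : ∀ i, X i = f ∘ W i := by
    intro i; funext ω
    simp only [hXdef, hfdef, Function.comp_apply, Set.indicator_apply, hWdef, hsdef,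
      Set.mem_setOf_eq]
  have hXindep : Pairwise (Function.onFun (IndepFun · · μ) X) := by
    intro i j hij
    rw [Function.onFun, hXeq i, hXeq j]
    exact (hindep.indepFun hij).comp hf hf
  have hXident : ∀ i, IdentDistrib (X i) (X 0) μ μ := by
    intro i
    rw [hXeq i, hXeq 0]
    exact IdentDistrib.comp ⟨(hW i).aemeasurable, (hW 0).aemeasurable, hident i⟩ hf
  set A : Set Ω := {ω | τstar ≤ Y 0 ω ∧ Y 0 ω ≤ τ₀ ∧ Δ 0 ω = 1} with hAdef
  have hA : MeasurableSet A := by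
    have : A = W 0 ⁻¹' s := rfl
    rw [this]; exact (hW 0) hs
  have hXA : X 0 = A.indicator (fun _ => (1:ℝ)) := by
    funext ω
    simp only [hXdef, Set.indicator_apply, hAdef, Set.mem_setOf_eq]
  have hint : Integrable (X 0) μ := by
    rw [hXA]; exact (integrable_const 1).indicator hA
  have hmean : μ[X 0] = (μ A).toReal := by
    rw [hXA]
    exact integral_indicator_one hA
  set p : ℝ := (μ A).toReal with hpdef
  have hp : 0 < p := ENNReal.toReal_pos hpos.ne' (measure_ne_top μ A)
  have hslln := strong_law_ae_real X hint hXindep hXident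
  rw [hmean] at hslln
  filter_upwards [hslln, ae_all_iff.2 hZbdd] with ω hTend hZω
  -- get N with S n ≥ p/2 for n ≥ N
  obtain ⟨N, hN⟩ := Filter.eventually_atTop.1
    (hTend.eventually (eventually_ge_nhds (show p/2 < p by linarith)))
  refine ⟨max ((N:ℝ) * E) (2 * E / p), ?_⟩
  intro n hn
  have hn0 : (0:ℝ) < n := by exact_mod_cast hn
  -- common facts
  have hexp : ∀ j, Real.exp (-(C * m)) ≤ Real.exp (inner ℝ (βhat n ω) (Z j ω)) := by
    intro j
    apply Real.exp_le_exp.2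
    have h1 : |(inner ℝ (βhat n ω) (Z j ω) : ℝ)| ≤ C * m :=
      (abs_real_inner_le_norm _ _).trans
        (mul_le_mul (hC _ (hβhat n ω)) (hZω j) (norm_nonneg _) hC0)
    linarith [(abs_le.1 h1).1]
  have hanneg : ∀ i j, 0 ≤ (if Y i ω ≤ Y j ω ∧ Y j ω ≤ τ₀ then (1 : ℝ) else 0)
      * Real.exp (inner ℝ (βhat n ω) (Z j ω))
      * (Δ j ω + (1 - Δ j ω) * ghat n j ω) := by
    intro i j
    have h2 : 0 ≤ Δ j ω + (1 - Δ j ω) * ghat n j ω := by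
      rcases hΔ01 j ω with h | h <;> simp [h]
      exact (hghat n j ω).1
    positivity
  have hf0 : ∀ i, (if Y i ω < τstar then Δ i ω else 0) = 0 ∨
      (if Y i ω < τstar then Δ i ω else 0) = 1 := by
    intro i
    rcases hΔ01 i ω with h | h <;> by_cases hc : Y i ω < τstar <;> simp [hc, h]
  have hnum : ∀ i, (if Y i ω < τstar then Δ i ω else 0) = 1 →
      Y i ω < τstar ∧ Δ i ω = 1 := by
    intro i hi
    by_cases hc : Y i ω < τstar
    · rw [if_pos hc] at hi; exact ⟨hc, hi⟩
    · rw [if_neg hc] at hi; exact absurd hi zero_ne_one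
  -- per-j lower bounds when numerator is 1
  have hterm : ∀ i j, Y i ω < τstar →
      Real.exp (-(C * m)) * X j ω ≤ (if Y i ω ≤ Y j ω ∧ Y j ω ≤ τ₀ then (1 : ℝ) else 0)
        * Real.exp (inner ℝ (βhat n ω) (Z j ω))
        * (Δ j ω + (1 - Δ j ω) * ghat n j ω) := by
    intro i j hiτ
    by_cases hXj : τstar ≤ Y j ω ∧ Y j ω ≤ τ₀ ∧ Δ j ω = 1
    · have hXj1 : X j ω = 1 := by simp only [hXdef]; rw [if_pos hXj]
      have hcond : Y i ω ≤ Y j ω ∧ Y j ω ≤ τ₀ := ⟨hiτ.le.trans hXj.1, hXj.2.1⟩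
      rw [hXj1, mul_one, if_pos hcond, one_mul, hXj.2.2]
      calc Real.exp (-(C * m)) ≤ Real.exp (inner ℝ (βhat n ω) (Z j ω)) := hexp j
        _ = Real.exp (inner ℝ (βhat n ω) (Z j ω)) * (1 + (1-1) * ghat n j ω) := by ring
    · have hXj0 : X j ω = 0 := by simp only [hXdef]; rw [if_neg hXj]
      rw [hXj0, mul_zero]
      exact hanneg i j
  rcases le_or_gt (N : ℕ) n with hcase | hcase
  · -- n ≥ N : use the empirical frequency lower bound
    have hS : p / 2 ≤ (∑ j ∈ Finset.range n, X j ω) / n := hN n hcase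
    set L : ℝ := Real.exp (-(C * m)) * (p / 2) with hLdef
    have hL : 0 < L := by positivity
    refine le_trans (avg_div_le_aux hn _ _ L hL hf0 ?_) ?_
    · intro i hi hi1
      obtain ⟨hiτ, _⟩ := hnum i hi1
      have hsum : ∑ j ∈ Finset.range n, Real.exp (-(C * m)) * X j ω ≤
          ∑ j ∈ Finset.range n, (if Y i ω ≤ Y j ω ∧ Y j ω ≤ τ₀ then (1 : ℝ) else 0)
            * Real.exp (inner ℝ (βhat n ω) (Z j ω))
            * (Δ j ω + (1 - Δ j ω) * ghat n j ω) :=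
        Finset.sum_le_sum fun j _ => hterm i j hiτ
      have h1 : L ≤ Real.exp (-(C * m)) * ((∑ j ∈ Finset.range n, X j ω) / n) :=
        mul_le_mul_of_nonneg_left hS (Real.exp_nonneg _)
      have h2 : Real.exp (-(C * m)) * ((∑ j ∈ Finset.range n, X j ω) / n)
          = (n:ℝ)⁻¹ * ∑ j ∈ Finset.range n, Real.exp (-(C * m)) * X j ω := by
        rw [← Finset.mul_sum]; ring
      calc L ≤ (n:ℝ)⁻¹ * ∑ j ∈ Finset.range n, Real.exp (-(C * m)) * X j ω := by
            rw [← h2]; exact h1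
        _ ≤ _ := mul_le_mul_of_nonneg_left hsum (by positivity)
    · have : 1 / L = 2 * E / p := by
        rw [hLdef, Real.exp_neg, ← hEdef]
        field_simp
      rw [this]
      exact le_max_right _ _
  · -- n < N : crude bound using the j = i term
    set L : ℝ := (n:ℝ)⁻¹ * Real.exp (-(C * m)) with hLdef
    have hL : 0 < L := by positivity
    refine le_trans (avg_div_le_aux hn _ _ L hL hf0 ?_) ?_
    · intro i hi hi1
      obtain ⟨hiτ, hΔi⟩ := hnum i hi1
      have hai : Real.exp (-(C * m)) ≤ (if Y i ω ≤ Y i ω ∧ Y i ω ≤ τ₀ then (1 : ℝ) else 0)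
          * Real.exp (inner ℝ (βhat n ω) (Z i ω))
          * (Δ i ω + (1 - Δ i ω) * ghat n i ω) := by
        rw [if_pos ⟨le_refl _, hiτ.le.trans hτ⟩, hΔi]
        calc Real.exp (-(C * m)) ≤ Real.exp (inner ℝ (βhat n ω) (Z i ω)) := hexp i
          _ = 1 * Real.exp (inner ℝ (βhat n ω) (Z i ω)) * (1 + (1 - 1) * ghat n i ω) := by
            ring
      have hsum : (if Y i ω ≤ Y i ω ∧ Y i ω ≤ τ₀ then (1 : ℝ) else 0)
          * Real.exp (inner ℝ (βhat n ω) (Z i ω))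
          * (Δ i ω + (1 - Δ i ω) * ghat n i ω)
          ≤ ∑ j ∈ Finset.range n, (if Y i ω ≤ Y j ω ∧ Y j ω ≤ τ₀ then (1 : ℝ) else 0)
            * Real.exp (inner ℝ (βhat n ω) (Z j ω))
            * (Δ j ω + (1 - Δ j ω) * ghat n j ω) :=
        Finset.single_le_sum (fun j _ => hanneg i j) hi
      exact mul_le_mul_of_nonneg_left (hai.trans hsum) (by positivity)
    · have : 1 / L = (n : ℝ) * E := by
        rw [hLdef, Real.exp_neg, ← hEdef]
        field_simp
      rw [this]
      refine le_max_of_le_left ?_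
      have : (n : ℝ) ≤ (N : ℝ) := by exact_mod_cast hcase.le
      exact mul_le_mul_of_nonneg_right this hEpos.le
end

section
/- Let B ⊂ ℝ^q be a compact set and β₀ ∈ ℝ^q. Then inf_{β∈B} ℙ((β − β₀)ᵀZ ≥ 0) > 0 and inf_{β∈B} ℙ((β − β₀)ᵀZ ≤ 0) > 0. -/
open MeasureTheory

lemma halfspace_key
    {Ω : Type*} [MeasurableSpace Ω] (μ : Measure Ω) [IsProbabilityMeasure μ]
    {q : ℕ} (M lam : ℝ) (hM : 0 < M) (hlam : 0 < lam)
    (Z : Ω → EuclideanSpace ℝ (Fin q)) (hZ : Measurable Z)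
    (hZbdd : ∀ᵐ ω ∂μ, ‖Z ω‖ ≤ M)
    (hZmean : ∫ ω, Z ω ∂μ = 0)
    (hZvar : ∀ u : EuclideanSpace ℝ (Fin q),
      lam * ‖u‖ ^ 2 ≤ ∫ ω, (inner ℝ u (Z ω) : ℝ) ^ 2 ∂μ)
    (u : EuclideanSpace ℝ (Fin q)) :
    ENNReal.ofReal (min 1 (lam / (2 * M ^ 2))) ≤ μ {ω | 0 ≤ (inner ℝ u (Z ω) : ℝ)} := by
  rcases eq_or_ne u 0 with rfl | hu
  · have : {ω | 0 ≤ (inner ℝ (0 : EuclideanSpace ℝ (Fin q)) (Z ω) : ℝ)} = Set.univ := by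
      ext ω; simp [inner_zero_left]
    rw [this, measure_univ]
    calc ENNReal.ofReal (min 1 (lam / (2 * M ^ 2))) ≤ ENNReal.ofReal 1 :=
          ENNReal.ofReal_le_ofReal (min_le_left _ _)
      _ = 1 := ENNReal.ofReal_one
  · set X : Ω → ℝ := fun ω => (inner ℝ u (Z ω) : ℝ) with hX
    have hXmeas : Measurable X := Measurable.inner measurable_const hZ
    have hXb : ∀ᵐ ω ∂μ, |X ω| ≤ M * ‖u‖ := by
      filter_upwards [hZbdd] with ω hω
      calc |X ω| ≤ ‖u‖ * ‖Z ω‖ := abs_real_inner_le_norm u (Z ω)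
        _ ≤ ‖u‖ * M := by gcongr
        _ = M * ‖u‖ := mul_comm _ _
    have hZint : Integrable Z μ := by
      refine Integrable.mono' (integrable_const M) hZ.aestronglyMeasurable ?_
      filter_upwards [hZbdd] with ω hω using hω
    have hXint : Integrable X μ := by
      refine Integrable.mono' (integrable_const (M * ‖u‖)) hXmeas.aestronglyMeasurable ?_
      filter_upwards [hXb] with ω hω using hω
    have hXmean : ∫ ω, X ω ∂μ = 0 := by
      rw [hX]
      simp only
      rw [integral_inner hZint, hZmean, inner_zero_right]
    -- positive part
    set P : Ω → ℝ := fun ω => max (X ω) 0 with hP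
    have hPint : Integrable P μ := hXint.pos_part
    have habs : Integrable (fun ω => |X ω|) μ := hXint.abs
    have habsP : ∫ ω, |X ω| ∂μ = 2 * ∫ ω, P ω ∂μ := by
      have : ∀ ω, |X ω| = 2 * P ω - X ω := by
        intro ω; rcases le_or_gt 0 (X ω) with h | h
        · rw [abs_of_nonneg h, hP]; simp [max_eq_left h]; ring
        · rw [abs_of_neg h, hP]; simp [max_eq_right h.le]
      simp_rw [this]
      rw [integral_sub ((hPint.const_mul 2)) hXint, integral_const_mul, hXmean, sub_zero]
    set S : Set Ω := {ω | 0 ≤ X ω} with hS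
    have hSmeas : MeasurableSet S := measurableSet_le measurable_const hXmeas
    -- ∫ P ≤ M‖u‖ * μ.real S
    have hPle : ∫ ω, P ω ∂μ ≤ (μ S).toReal * (M * ‖u‖) := by
      have hind : Integrable (S.indicator fun _ => M * ‖u‖) μ :=
        (integrable_const _).indicator hSmeas
      have hmono : ∀ᵐ ω ∂μ, P ω ≤ S.indicator (fun _ => M * ‖u‖) ω := by
        filter_upwards [hXb] with ω hω
        rcases le_or_gt 0 (X ω) with h | h
        · have hmem : ω ∈ S := h
          rw [Set.indicator_of_mem hmem, hP]
          simp only [max_le_iff]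
          exact ⟨(le_abs_self _).trans hω, by positivity⟩
        · have : P ω = 0 := max_eq_right h.le
          rw [this]
          exact Set.indicator_nonneg (fun _ _ => by positivity) ω
      calc ∫ ω, P ω ∂μ ≤ ∫ ω, S.indicator (fun _ => M * ‖u‖) ω ∂μ :=
            integral_mono_ae hPint hind hmono
        _ = (μ S).toReal • (M * ‖u‖) := integral_indicator_const _ hSmeas
        _ = (μ S).toReal * (M * ‖u‖) := by rw [smul_eq_mul]
    -- ∫ X² ≤ M‖u‖ ∫ |X|
    have hsqint : Integrable (fun ω => X ω ^ 2) μ := by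
      refine Integrable.mono' (integrable_const ((M * ‖u‖) ^ 2)) ((hXmeas.pow_const 2).aestronglyMeasurable) ?_
      filter_upwards [hXb] with ω hω
      rw [Real.norm_eq_abs, abs_pow]
      exact pow_le_pow_left₀ (abs_nonneg _) hω 2
    have hsqle : ∫ ω, X ω ^ 2 ∂μ ≤ (M * ‖u‖) * ∫ ω, |X ω| ∂μ := by
      rw [← integral_const_mul]
      refine integral_mono_ae hsqint (habs.const_mul _) ?_
      filter_upwards [hXb] with ω hω
      calc X ω ^ 2 = |X ω| * |X ω| := by rw [← abs_mul, ← sq, abs_of_nonneg (sq_nonneg _)]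
        _ ≤ (M * ‖u‖) * |X ω| := by
            apply mul_le_mul_of_nonneg_right hω (abs_nonneg _)
    -- combine
    have hchain : lam * ‖u‖ ^ 2 ≤ 2 * M ^ 2 * ‖u‖ ^ 2 * (μ S).toReal := by
      calc lam * ‖u‖ ^ 2 ≤ ∫ ω, X ω ^ 2 ∂μ := hZvar u
        _ ≤ (M * ‖u‖) * ∫ ω, |X ω| ∂μ := hsqle
        _ = (M * ‖u‖) * (2 * ∫ ω, P ω ∂μ) := by rw [habsP]
        _ ≤ (M * ‖u‖) * (2 * ((μ S).toReal * (M * ‖u‖))) := by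
            have h1 : 0 ≤ M * ‖u‖ := by positivity
            gcongr
        _ = 2 * M ^ 2 * ‖u‖ ^ 2 * (μ S).toReal := by ring
    have hup : 0 < ‖u‖ := norm_pos_iff.mpr hu
    have hreal : lam / (2 * M ^ 2) ≤ (μ S).toReal := by
      rw [div_le_iff₀ (by positivity)]
      have h3 : lam * ‖u‖ ^ 2 ≤ (2 * M ^ 2 * (μ S).toReal) * ‖u‖ ^ 2 := by
        have := hchain; ring_nf at this ⊢; linarith
      have h2 : lam ≤ 2 * M ^ 2 * (μ S).toReal := (mul_le_mul_iff_left₀ (pow_pos hup 2)).mp h3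
      linarith
    calc ENNReal.ofReal (min 1 (lam / (2 * M ^ 2)))
        ≤ ENNReal.ofReal ((μ S).toReal) :=
          ENNReal.ofReal_le_ofReal ((min_le_right _ _).trans hreal)
      _ = μ S := ENNReal.ofReal_toReal (measure_ne_top μ S)


/-- For a bounded, centered random vector `Z` with covariance matrix whose
smallest eigenvalue is at least `λ > 0`, and a compact set `B ⊂ ℝ^q`,
`inf_{β ∈ B} ℙ((β − β₀)ᵀZ ≥ 0) > 0` and `inf_{β ∈ B} ℙ((β − β₀)ᵀZ ≤ 0) > 0`. -/
theorem inf_prob_halfspace_pos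
    {Ω : Type*} [MeasurableSpace Ω] (μ : Measure Ω) [IsProbabilityMeasure μ]
    {q : ℕ} (M lam : ℝ) (hM : 0 < M) (hlam : 0 < lam)
    (Z : Ω → EuclideanSpace ℝ (Fin q)) (hZ : Measurable Z)
    (hZbdd : ∀ᵐ ω ∂μ, ‖Z ω‖ ≤ M)
    (hZmean : ∫ ω, Z ω ∂μ = 0)
    (hZvar : ∀ u : EuclideanSpace ℝ (Fin q),
      lam * ‖u‖ ^ 2 ≤ ∫ ω, (inner ℝ u (Z ω) : ℝ) ^ 2 ∂μ)
    (B : Set (EuclideanSpace ℝ (Fin q))) (hB : IsCompact B)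
    (β₀ : EuclideanSpace ℝ (Fin q)) :
    (∃ c : ENNReal, 0 < c ∧ ∀ β ∈ B,
        c ≤ μ {ω | 0 ≤ (inner ℝ (β - β₀) (Z ω) : ℝ)}) ∧
    (∃ c : ENNReal, 0 < c ∧ ∀ β ∈ B,
        c ≤ μ {ω | (inner ℝ (β - β₀) (Z ω) : ℝ) ≤ 0}) := by
  have hcpos : (0 : ENNReal) < ENNReal.ofReal (min 1 (lam / (2 * M ^ 2))) := by
    apply ENNReal.ofReal_pos.mpr
    apply lt_min one_pos (by positivity)
  refine ⟨⟨_, hcpos, fun β _ => halfspace_key μ M lam hM hlam Z hZ hZbdd hZmean hZvar (β - β₀)⟩,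
    ⟨_, hcpos, fun β _ => ?_⟩⟩
  have h := halfspace_key μ M lam hM hlam Z hZ hZbdd hZmean hZvar (β₀ - β)
  have : {ω | 0 ≤ (inner ℝ (β₀ - β) (Z ω) : ℝ)} = {ω | (inner ℝ (β - β₀) (Z ω) : ℝ) ≤ 0} := by
    ext ω
    simp only [Set.mem_setOf_eq]
    rw [show β₀ - β = -(β - β₀) by abel, inner_neg_left]
    constructor <;> intro h1 <;> linarith
  rwa [this] at h
end

section
/- For every u ∈ ℝ^q with ‖u‖ = 1, 𝔼[(uᵀZ)·1{uᵀZ < 0}] ≤ −λ/(2M); in particular, sup_{‖u‖=1} 𝔼[(uᵀZ)·1{uᵀZ < 0}] < 0. -/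
open MeasureTheory

/-- For every unit vector `u`, `𝔼[(uᵀZ)·1{uᵀZ < 0}] ≤ −λ/(2M)`; in particular
`sup_{‖u‖ = 1} 𝔼[(uᵀZ)·1{uᵀZ < 0}] < 0`. -/
theorem expectation_negative_part_bound
    {Ω : Type*} [MeasurableSpace Ω] (μ : Measure Ω) [IsProbabilityMeasure μ]
    {q : ℕ} (M lam : ℝ) (hM : 0 < M) (hlam : 0 < lam)
    (Z : Ω → EuclideanSpace ℝ (Fin q)) (hZ : Measurable Z)
    (hZbdd : ∀ᵐ ω ∂μ, ‖Z ω‖ ≤ M)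
    (hZmean : ∫ ω, Z ω ∂μ = 0)
    (hZvar : ∀ u : EuclideanSpace ℝ (Fin q),
      lam * ‖u‖ ^ 2 ≤ ∫ ω, (inner ℝ u (Z ω) : ℝ) ^ 2 ∂μ) :
    (∀ u : EuclideanSpace ℝ (Fin q), ‖u‖ = 1 →
      (∫ ω, (if (inner ℝ u (Z ω) : ℝ) < 0 then (inner ℝ u (Z ω) : ℝ) else 0) ∂μ)
        ≤ -(lam / (2 * M))) ∧
    (∃ c : ℝ, c < 0 ∧ ∀ u : EuclideanSpace ℝ (Fin q), ‖u‖ = 1 →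
      (∫ ω, (if (inner ℝ u (Z ω) : ℝ) < 0 then (inner ℝ u (Z ω) : ℝ) else 0) ∂μ)
        ≤ c) := by
  have hZint : Integrable Z μ :=
    Integrable.mono' (integrable_const M) hZ.aestronglyMeasurable hZbdd
  have main : ∀ u : EuclideanSpace ℝ (Fin q), ‖u‖ = 1 →
      (∫ ω, (if (inner ℝ u (Z ω) : ℝ) < 0 then (inner ℝ u (Z ω) : ℝ) else 0) ∂μ)
        ≤ -(lam / (2 * M)) := by
    intro u hu
    have hfmeas : Measurable (fun ω => (inner ℝ u (Z ω) : ℝ)) := measurable_const.inner hZ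
    set f : Ω → ℝ := fun ω => (inner ℝ u (Z ω) : ℝ) with hf
    have hfb : ∀ᵐ ω ∂μ, |f ω| ≤ M := by
      filter_upwards [hZbdd] with ω hω
      calc |f ω| ≤ ‖u‖ * ‖Z ω‖ := abs_real_inner_le_norm u (Z ω)
        _ = ‖Z ω‖ := by rw [hu, one_mul]
        _ ≤ M := hω
    have hfint : Integrable f μ := by
      refine Integrable.mono' (integrable_const M) hfmeas.aestronglyMeasurable ?_
      simpa using hfb
    have hfabs : Integrable (fun ω => |f ω|) μ := hfint.abs
    have hfmin : Integrable (fun ω => min (f ω) 0) μ := by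
      refine Integrable.mono' hfabs (hfmeas.min measurable_const).aestronglyMeasurable ?_
      filter_upwards with ω
      rw [Real.norm_eq_abs, abs_le]
      exact ⟨le_min (neg_abs_le _) (neg_nonpos.mpr (abs_nonneg _)),
        (min_le_left _ _).trans (le_abs_self _)⟩
    have hfmax : Integrable (fun ω => max (f ω) 0) μ := by
      refine Integrable.mono' hfabs (hfmeas.max measurable_const).aestronglyMeasurable ?_
      filter_upwards with ω
      rw [Real.norm_eq_abs, abs_le]
      exact ⟨(neg_nonpos.mpr (abs_nonneg _)).trans (le_max_right _ _),
        max_le (le_abs_self _) (abs_nonneg _)⟩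
    have hmean : ∫ ω, f ω ∂μ = 0 := by
      have h := integral_inner (𝕜 := ℝ) hZint u
      rw [hZmean, inner_zero_right] at h
      exact h
    have hsplit : ∫ ω, max (f ω) 0 ∂μ + ∫ ω, min (f ω) 0 ∂μ = 0 := by
      rw [← integral_add hfmax hfmin]
      simp only [max_add_min, add_zero]
      exact hmean
    have habs : ∫ ω, |f ω| ∂μ = ∫ ω, max (f ω) 0 ∂μ - ∫ ω, min (f ω) 0 ∂μ := by
      rw [← integral_sub hfmax hfmin]
      congr 1
      funext ω
      rw [max_sub_min_eq_abs, zero_sub, abs_neg]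
    have hsq : Integrable (fun ω => f ω ^ 2) μ := by
      refine Integrable.mono' (hfabs.const_mul M) (hfmeas.pow_const 2).aestronglyMeasurable ?_
      filter_upwards [hfb] with ω hω
      rw [Real.norm_eq_abs, abs_pow, pow_two]
      exact mul_le_mul_of_nonneg_right hω (abs_nonneg _)
    have hvar : lam ≤ ∫ ω, f ω ^ 2 ∂μ := by
      have h := hZvar u
      rwa [hu, one_pow, mul_one] at h
    have h2 : ∫ ω, f ω ^ 2 ∂μ ≤ M * ∫ ω, |f ω| ∂μ := by
      rw [← integral_const_mul]
      refine integral_mono_ae hsq (hfabs.const_mul M) ?_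
      filter_upwards [hfb] with ω hω
      rw [pow_two, ← abs_mul_abs_self (f ω)]
      exact mul_le_mul_of_nonneg_right hω (abs_nonneg _)
    have heq : (fun ω => if (inner ℝ u (Z ω) : ℝ) < 0 then (inner ℝ u (Z ω) : ℝ) else 0)
        = fun ω => min (f ω) 0 := by
      funext ω
      by_cases h : (inner ℝ u (Z ω) : ℝ) < 0
      · rw [if_pos h]; exact (min_eq_left h.le).symm
      · rw [if_neg h]; exact (min_eq_right (not_lt.mp h)).symm
    rw [heq]
    have key : lam ≤ M * (-2 * ∫ ω, min (f ω) 0 ∂μ) := by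
      have hA : ∫ ω, |f ω| ∂μ = -2 * ∫ ω, min (f ω) 0 ∂μ := by
        rw [habs]; linarith
      rw [← hA]; linarith
    rw [le_neg, div_le_iff₀ (by positivity : (0:ℝ) < 2 * M)]
    nlinarith
  exact ⟨main, ⟨-(lam / (2 * M)), neg_lt_zero.mpr (by positivity), main⟩⟩
end

section
/- For every u ∈ ℝ^q with ‖u‖ = 1, one has ℙ(uᵀZ ≥ 0) ≥ λ/(2M²) and ℙ(uᵀZ ≤ 0) ≥ λ/(2M²). -/
open MeasureTheory

lemma aux_halfspace {Ω : Type*} [MeasurableSpace Ω] (μ : Measure Ω)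
    [IsProbabilityMeasure μ] (M lam : ℝ) (hM : 0 < M) (hlam : 0 < lam)
    (X : Ω → ℝ) (hX : Measurable X)
    (hb : ∀ᵐ ω ∂μ, |X ω| ≤ M) (hmean : ∫ ω, X ω ∂μ = 0)
    (hvar : lam ≤ ∫ ω, X ω ^ 2 ∂μ) :
    ENNReal.ofReal (lam / (2 * M ^ 2)) ≤ μ {ω | 0 ≤ X ω} := by
  set A : Set Ω := {ω | 0 ≤ X ω} with hA_def
  have hA : MeasurableSet A := hX measurableSet_Ici
  have hXint : Integrable X μ := by
    refine (integrable_const M).mono' hX.aestronglyMeasurable ?_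
    filter_upwards [hb] with ω h using by simpa using h
  have hX2int : Integrable (fun ω => X ω ^ 2) μ := by
    refine (integrable_const (M ^ 2)).mono' (hX.pow_const 2).aestronglyMeasurable ?_
    filter_upwards [hb] with ω h
    have : |X ω| ^ 2 ≤ M ^ 2 := pow_le_pow_left₀ (abs_nonneg _) h 2
    simpa [abs_pow, sq_abs] using this
  set t : ℝ := (μ A).toReal with ht_def
  have ht0 : 0 ≤ t := ENNReal.toReal_nonneg
  -- bound on A
  have h1 : ∫ ω in A, X ω ^ 2 ∂μ ≤ M ^ 2 * t := by
    have : ∫ ω in A, X ω ^ 2 ∂μ ≤ ∫ _ω in A, M ^ 2 ∂μ := by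
      refine setIntegral_mono_ae_restrict hX2int.integrableOn (integrable_const _).integrableOn ?_
      filter_upwards [ae_restrict_of_ae hb] with ω h
      have : |X ω| ^ 2 ≤ M ^ 2 := pow_le_pow_left₀ (abs_nonneg _) h 2
      simpa [sq_abs] using this
    simpa [setIntegral_const, smul_eq_mul, mul_comm, ht_def, measureReal_def] using this
  -- ∫_A X ≤ M t
  have h2 : ∫ ω in A, X ω ∂μ ≤ M * t := by
    have : ∫ ω in A, X ω ∂μ ≤ ∫ _ω in A, M ∂μ := by
      refine setIntegral_mono_ae_restrict hXint.integrableOn (integrable_const _).integrableOn ?_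
      filter_upwards [ae_restrict_of_ae hb] with ω h
      exact le_trans (le_abs_self _) h
    simpa [setIntegral_const, smul_eq_mul, mul_comm, ht_def, measureReal_def] using this
  -- ∫_Aᶜ X = - ∫_A X
  have hsplit : ∫ ω in A, X ω ∂μ + ∫ ω in Aᶜ, X ω ∂μ = 0 := by
    rw [integral_add_compl hA hXint, hmean]
  have h3 : ∫ ω in Aᶜ, X ω ^ 2 ∂μ ≤ M * ∫ ω in Aᶜ, (-X ω) ∂μ := by
    rw [← integral_const_mul]
    refine setIntegral_mono_ae_restrict hX2int.integrableOn
      ((hXint.neg.const_mul M).integrableOn) ?_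
    filter_upwards [ae_restrict_of_ae hb, ae_restrict_mem hA.compl] with ω h hω
    have hneg : X ω < 0 := by simpa [A] using hω
    have habs : |X ω| = -X ω := abs_of_neg hneg
    calc X ω ^ 2 = |X ω| * |X ω| := by rw [← abs_mul, abs_mul_self]; ring
      _ ≤ M * |X ω| := by
          apply mul_le_mul_of_nonneg_right h (abs_nonneg _)
      _ = M * (-X ω) := by rw [habs]
  have h4 : ∫ ω in Aᶜ, (-X ω) ∂μ = ∫ ω in A, X ω ∂μ := by
    rw [integral_neg]; linarith
  have hsum : ∫ ω, X ω ^ 2 ∂μ = ∫ ω in A, X ω ^ 2 ∂μ + ∫ ω in Aᶜ, X ω ^ 2 ∂μ :=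
    (integral_add_compl hA hX2int).symm
  have hlam2 : lam ≤ 2 * M ^ 2 * t := by
    have := h3
    rw [h4] at this
    nlinarith [hvar, hsum, h1, h2, this]
  have hμA : μ A ≠ ⊤ := (measure_lt_top μ A).ne
  rw [ENNReal.ofReal_le_iff_le_toReal hμA]
  rw [div_le_iff₀ (by positivity)]
  linarith [hlam2]

/-- For every unit vector `u`, `ℙ(uᵀZ ≥ 0) ≥ λ/(2M²)` and
`ℙ(uᵀZ ≤ 0) ≥ λ/(2M²)`. -/
theorem prob_halfspace_lower_bound
    {Ω : Type*} [MeasurableSpace Ω] (μ : Measure Ω) [IsProbabilityMeasure μ]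
    {q : ℕ} (M lam : ℝ) (hM : 0 < M) (hlam : 0 < lam)
    (Z : Ω → EuclideanSpace ℝ (Fin q)) (hZ : Measurable Z)
    (hZbdd : ∀ᵐ ω ∂μ, ‖Z ω‖ ≤ M)
    (hZmean : ∫ ω, Z ω ∂μ = 0)
    (hZvar : ∀ u : EuclideanSpace ℝ (Fin q),
      lam * ‖u‖ ^ 2 ≤ ∫ ω, (inner ℝ u (Z ω) : ℝ) ^ 2 ∂μ) :
    ∀ u : EuclideanSpace ℝ (Fin q), ‖u‖ = 1 →
      ENNReal.ofReal (lam / (2 * M ^ 2)) ≤ μ {ω | 0 ≤ (inner ℝ u (Z ω) : ℝ)} ∧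
      ENNReal.ofReal (lam / (2 * M ^ 2)) ≤ μ {ω | (inner ℝ u (Z ω) : ℝ) ≤ 0} := by
  have hZint : Integrable Z μ := by
    refine (integrable_const M).mono' hZ.aestronglyMeasurable ?_
    filter_upwards [hZbdd] with ω h using by simpa using h
  have key : ∀ u : EuclideanSpace ℝ (Fin q), ‖u‖ = 1 →
      ENNReal.ofReal (lam / (2 * M ^ 2)) ≤ μ {ω | 0 ≤ (inner ℝ u (Z ω) : ℝ)} := by
    intro u hu
    refine aux_halfspace μ M lam hM hlam (fun ω => (inner ℝ u (Z ω) : ℝ))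
      (measurable_const.inner hZ) ?_ ?_ ?_
    · filter_upwards [hZbdd] with ω h
      calc |(inner ℝ u (Z ω) : ℝ)| ≤ ‖u‖ * ‖Z ω‖ := abs_real_inner_le_norm u (Z ω)
        _ ≤ M := by rw [hu, one_mul]; exact h
    · rw [integral_inner hZint, hZmean, inner_zero_right]
    · have := hZvar u
      simpa [hu] using this
  intro u hu
  refine ⟨key u hu, ?_⟩
  have h := key (-u) (by simpa using hu)
  have : {ω | 0 ≤ (inner ℝ (-u) (Z ω) : ℝ)} = {ω | (inner ℝ u (Z ω) : ℝ) ≤ 0} := by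
    ext ω
    simp [inner_neg_left, neg_nonneg]
  rwa [this] at h
end

section
/- Let β, β₀ ∈ ℝ^q and δ > 0 satisfy ‖β − β₀‖ ≥ δ, and set z₀ = δ√λ / 2. Then ℙ((β − β₀)ᵀZ ≥ z₀) + ℙ((β − β₀)ᵀZ ≤ −z₀) ≥ λ/(2M²); in particular, this lower bound is uniform over all β with ‖β − β₀‖ ≥ δ. -/
open MeasureTheory

/-- For `‖β − β₀‖ ≥ δ` and `z₀ = δ√λ/2` one has
`ℙ((β − β₀)ᵀZ ≥ z₀) + ℙ((β − β₀)ᵀZ ≤ −z₀) ≥ λ/(2M²)`; since `β` is universally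
quantified, this lower bound is uniform over all `β` with `‖β − β₀‖ ≥ δ`. -/
theorem prob_tails_lower_bound
    {Ω : Type*} [MeasurableSpace Ω] (μ : Measure Ω) [IsProbabilityMeasure μ]
    {q : ℕ} (M lam : ℝ) (hM : 0 < M) (hlam : 0 < lam)
    (Z : Ω → EuclideanSpace ℝ (Fin q)) (hZ : Measurable Z)
    (hZbdd : ∀ᵐ ω ∂μ, ‖Z ω‖ ≤ M)
    (hZmean : ∫ ω, Z ω ∂μ = 0)
    (hZvar : ∀ u : EuclideanSpace ℝ (Fin q),
      lam * ‖u‖ ^ 2 ≤ ∫ ω, (inner ℝ u (Z ω) : ℝ) ^ 2 ∂μ)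
    (β β₀ : EuclideanSpace ℝ (Fin q)) (δ : ℝ) (hδ : 0 < δ)
    (hββ₀ : δ ≤ ‖β - β₀‖) :
    ENNReal.ofReal (lam / (2 * M ^ 2)) ≤
      μ {ω | δ * Real.sqrt lam / 2 ≤ (inner ℝ (β - β₀) (Z ω) : ℝ)} +
      μ {ω | (inner ℝ (β - β₀) (Z ω) : ℝ) ≤ -(δ * Real.sqrt lam / 2)} := by
  set u : EuclideanSpace ℝ (Fin q) := β - β₀ with hu
  set X : Ω → ℝ := fun ω => (inner ℝ u (Z ω) : ℝ) with hX
  have hXmeas : Measurable X := (continuous_const.inner continuous_id).measurable.comp hZ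
  set z₀ : ℝ := δ * Real.sqrt lam / 2 with hz₀
  have hz₀pos : 0 < z₀ := by positivity
  set A : Set Ω := {ω | z₀ ≤ |X ω|} with hA
  have hAmeas : MeasurableSet A := measurableSet_le measurable_const hXmeas.abs
  have hupos : 0 < ‖u‖ := lt_of_lt_of_le hδ hββ₀
  set C : ℝ := (‖u‖ * M) ^ 2 with hC
  -- a.e. bound on X
  have hXbdd : ∀ᵐ ω ∂μ, |X ω| ≤ ‖u‖ * M := by
    filter_upwards [hZbdd] with ω hω
    calc |X ω| ≤ ‖u‖ * ‖Z ω‖ := abs_real_inner_le_norm u (Z ω)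
      _ ≤ ‖u‖ * M := by gcongr
  -- pointwise: X² ≤ z₀² + C · 1_A
  have hptwise : ∀ᵐ ω ∂μ, X ω ^ 2 ≤ z₀ ^ 2 + A.indicator (fun _ => C) ω := by
    filter_upwards [hXbdd] with ω hω
    by_cases h : ω ∈ A
    · rw [Set.indicator_of_mem h]
      have : X ω ^ 2 ≤ C := by
        rw [← sq_abs (X ω)]
        exact pow_le_pow_left₀ (abs_nonneg _) hω 2
      nlinarith [sq_nonneg z₀]
    · rw [Set.indicator_of_notMem h]
      simp only [hA, Set.mem_setOf_eq, not_le] at h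
      rw [← sq_abs (X ω)]
      nlinarith [abs_nonneg (X ω)]
  have hXint : Integrable (fun ω => X ω ^ 2) μ := by
    refine (integrable_const C).mono' ((hXmeas.pow_const 2).aestronglyMeasurable) ?_
    filter_upwards [hXbdd] with ω hω
    rw [Real.norm_eq_abs, abs_pow]
    exact pow_le_pow_left₀ (abs_nonneg _) hω 2
  have hRHSint : Integrable (fun ω => z₀ ^ 2 + A.indicator (fun _ => C) ω) μ := by
    exact (integrable_const _).add ((integrable_const C).indicator hAmeas)
  have hineq : lam * ‖u‖ ^ 2 ≤ z₀ ^ 2 + C * (μ A).toReal := by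
    calc lam * ‖u‖ ^ 2 ≤ ∫ ω, X ω ^ 2 ∂μ := hZvar u
      _ ≤ ∫ ω, (z₀ ^ 2 + A.indicator (fun _ => C) ω) ∂μ :=
          integral_mono_ae hXint hRHSint hptwise
      _ = z₀ ^ 2 + C * (μ A).toReal := by
          rw [integral_add (integrable_const _) ((integrable_const C).indicator hAmeas),
            integral_const, integral_indicator_const _ hAmeas]
          simp [mul_comm, Measure.real]
  -- from hineq derive lower bound on (μ A).toReal
  have hz₀sq : z₀ ^ 2 ≤ lam * ‖u‖ ^ 2 / 4 := by
    have h1 : z₀ ^ 2 = lam * δ ^ 2 / 4 := by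
      rw [hz₀]
      rw [div_pow, mul_pow, Real.sq_sqrt hlam.le]
      ring
    rw [h1]
    have : δ ^ 2 ≤ ‖u‖ ^ 2 := by gcongr
    nlinarith
  have hkey : lam / (2 * M ^ 2) ≤ (μ A).toReal := by
    have hCexp : C = ‖u‖ ^ 2 * M ^ 2 := by rw [hC]; ring
    rw [hCexp] at hineq
    have h2 : lam * ‖u‖ ^ 2 * (3 / 4) ≤ ‖u‖ ^ 2 * M ^ 2 * (μ A).toReal := by
      linarith [hineq, hz₀sq]
    have hupos2 : 0 < ‖u‖ ^ 2 := by positivity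
    have h3 : 3 / 4 * lam ≤ M ^ 2 * (μ A).toReal := by nlinarith [h2, hupos2]
    rw [div_le_iff₀ (by positivity)]
    linarith [hlam]
  have hμA : ENNReal.ofReal (lam / (2 * M ^ 2)) ≤ μ A := by
    calc ENNReal.ofReal (lam / (2 * M ^ 2)) ≤ ENNReal.ofReal (μ A).toReal :=
          ENNReal.ofReal_le_ofReal hkey
      _ = μ A := ENNReal.ofReal_toReal (measure_ne_top μ A)
  refine hμA.trans ?_
  have hsub : A ⊆ {ω | z₀ ≤ X ω} ∪ {ω | X ω ≤ -z₀} := by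
    intro ω hω
    rcases le_abs.mp (show z₀ ≤ |X ω| from hω) with h | h
    · exact Or.inl h
    · exact Or.inr (show X ω ≤ -z₀ by linarith)
  exact (measure_mono hsub).trans (measure_union_le _ _)
end

section
/- Let X be a random vector in ℝ^p with ‖X‖ ≤ m almost surely for a constant m > 0, and suppose the matrix 𝔼[X Xᵀ] is positive definite. Then for every γ₀ ∈ ℝ^p the matrix 𝔼[∇_γ φ(γ₀, X) ∇_γ φ(γ₀, X)ᵀ] = 𝔼[ φ(γ₀, X)² (1 − φ(γ₀, X))² X Xᵀ ] is positive definite; that is, assumption (AN3) holds for the logistic model. -/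
open MeasureTheory

private lemma coord_abs_le {p : ℕ} (v : EuclideanSpace ℝ (Fin p)) (i : Fin p) :
    |v i| ≤ ‖v‖ := by
  have h : v i = inner ℝ (EuclideanSpace.single i (1:ℝ)) v := by
    simp [EuclideanSpace.inner_single_left]
  rw [h]
  calc |inner ℝ (EuclideanSpace.single i (1:ℝ)) v| ≤ ‖EuclideanSpace.single i (1:ℝ)‖ * ‖v‖ :=
        abs_real_inner_le_norm _ _
    _ = ‖v‖ := by simp [EuclideanSpace.norm_single]

/-- Assumption (AN3) for the logistic model: if `X` is bounded and
`𝔼[X Xᵀ]` is positive definite, then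
`𝔼[∇_γ φ(γ₀, X) ∇_γ φ(γ₀, X)ᵀ] = 𝔼[φ(γ₀, X)²(1 − φ(γ₀, X))² X Xᵀ]`
is positive definite, where `φ(γ, x) = 1/(1 + exp(−γᵀx))`. -/
theorem logistic_AN3
    {Ω : Type*} [MeasurableSpace Ω] (μ : Measure Ω) [IsProbabilityMeasure μ]
    {p : ℕ} (m : ℝ) (hm : 0 < m)
    (X : Ω → EuclideanSpace ℝ (Fin p)) (hX : Measurable X)
    (hbdd : ∀ᵐ ω ∂μ, ‖X ω‖ ≤ m)
    (hpd : (Matrix.of fun i j => ∫ ω, X ω i * X ω j ∂μ).PosDef)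
    (γ₀ : EuclideanSpace ℝ (Fin p)) :
    (Matrix.of fun i j => ∫ ω,
        (1 / (1 + Real.exp (-(inner ℝ γ₀ (X ω) : ℝ)))) ^ 2
          * (1 - 1 / (1 + Real.exp (-(inner ℝ γ₀ (X ω) : ℝ)))) ^ 2
          * (X ω i * X ω j) ∂μ).PosDef := by
  classical
  set w : Ω → ℝ := fun ω =>
    (1 / (1 + Real.exp (-(inner ℝ γ₀ (X ω) : ℝ)))) ^ 2
      * (1 - 1 / (1 + Real.exp (-(inner ℝ γ₀ (X ω) : ℝ)))) ^ 2 with hwdef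
  show (Matrix.of fun i j => ∫ ω, w ω * (X ω i * X ω j) ∂μ).PosDef
  -- measurability
  have hXi : ∀ i, Measurable fun ω => X ω i := fun i =>
    ((EuclideanSpace.proj i : EuclideanSpace ℝ (Fin p) →L[ℝ] ℝ).continuous.measurable).comp hX
  have hinner : Measurable fun ω => (inner ℝ γ₀ (X ω) : ℝ) :=
    (Continuous.inner continuous_const continuous_id).measurable.comp hX
  have hwmeas : Measurable w := by
    have h1 : Measurable fun ω => 1 / (1 + Real.exp (-(inner ℝ γ₀ (X ω) : ℝ))) :=
      measurable_const.div (measurable_const.add hinner.neg.exp)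
    exact (h1.pow_const 2).mul ((measurable_const.sub h1).pow_const 2)
  -- pointwise bounds on the weight
  have hw01 : ∀ ω, 0 ≤ w ω ∧ w ω ≤ 1 := by
    intro ω
    set a := Real.exp (-(inner ℝ γ₀ (X ω) : ℝ)) with ha
    have hapos : 0 < a := Real.exp_pos _
    have h1 : 0 ≤ 1 / (1 + a) := by positivity
    have h2 : 1 / (1 + a) ≤ 1 := by
      rw [div_le_one (by linarith)]; linarith
    have hs1 : (1 / (1 + a)) ^ 2 ≤ 1 := by nlinarith
    have hs2 : (1 - 1 / (1 + a)) ^ 2 ≤ 1 := by nlinarith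
    constructor
    · show 0 ≤ (1 / (1 + a)) ^ 2 * (1 - 1 / (1 + a)) ^ 2
      positivity
    · show (1 / (1 + a)) ^ 2 * (1 - 1 / (1 + a)) ^ 2 ≤ 1
      nlinarith [sq_nonneg (1 / (1 + a)), sq_nonneg (1 - 1 / (1 + a))]
  set K := ‖γ₀‖ * m with hK
  set c := (1 / (1 + Real.exp K)) ^ 4 with hc
  have hcpos : 0 < c := by positivity
  have hwge : ∀ᵐ ω ∂μ, c ≤ w ω := by
    filter_upwards [hbdd] with ω hω
    set t := (inner ℝ γ₀ (X ω) : ℝ) with ht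
    have htK : |t| ≤ K := by
      calc |t| ≤ ‖γ₀‖ * ‖X ω‖ := abs_real_inner_le_norm _ _
        _ ≤ ‖γ₀‖ * m := by
            exact mul_le_mul_of_nonneg_left hω (norm_nonneg _)
    have habs := abs_le.mp htK
    set a := Real.exp (-t) with ha
    have hapos : 0 < a := Real.exp_pos _
    have haK : a ≤ Real.exp K := Real.exp_le_exp.mpr (by linarith)
    have hb : (0:ℝ) < 1 / (1 + Real.exp K) := by positivity
    have hbφ : 1 / (1 + Real.exp K) ≤ 1 / (1 + a) :=
      one_div_le_one_div_of_le (by linarith) (by linarith)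
    have h1φ : 1 - 1 / (1 + a) = a / (1 + a) := by field_simp; ring
    have hbφ2 : 1 / (1 + Real.exp K) ≤ 1 - 1 / (1 + a) := by
      rw [h1φ, div_le_div_iff₀ (by positivity) (by linarith)]
      have : (1:ℝ) ≤ a * Real.exp K := by
        have : a * Real.exp K = Real.exp (K - t) := by
          rw [ha, ← Real.exp_add]; ring_nf
        rw [this]
        calc (1:ℝ) = Real.exp 0 := (Real.exp_zero).symm
          _ ≤ Real.exp (K - t) := Real.exp_le_exp.mpr (by linarith)
      nlinarith
    have hφ0 : 0 ≤ 1 / (1 + a) := by positivity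
    calc c = (1 / (1 + Real.exp K)) ^ 2 * (1 / (1 + Real.exp K)) ^ 2 := by
          rw [hc]; ring
      _ ≤ (1 / (1 + a)) ^ 2 * (1 - 1 / (1 + a)) ^ 2 := by
          exact mul_le_mul (pow_le_pow_left₀ hb.le hbφ 2) (pow_le_pow_left₀ hb.le hbφ2 2)
            (by positivity) (by positivity)
      _ = w ω := rfl
  -- integrability of entries
  have hintw : ∀ i j, Integrable (fun ω => w ω * (X ω i * X ω j)) μ := by
    intro i j
    refine Integrable.mono' (integrable_const (m * m))
      ((hwmeas.mul ((hXi i).mul (hXi j))).aestronglyMeasurable) ?_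
    filter_upwards [hbdd] with ω hω
    have h1 : |X ω i| ≤ m := (coord_abs_le (X ω) i).trans hω
    have h2 : |X ω j| ≤ m := (coord_abs_le (X ω) j).trans hω
    have h3 := hw01 ω
    rw [Real.norm_eq_abs, abs_mul, abs_of_nonneg h3.1, abs_mul]
    calc w ω * (|X ω i| * |X ω j|) ≤ 1 * (m * m) :=
          mul_le_mul h3.2 (mul_le_mul h1 h2 (abs_nonneg _) hm.le) (by positivity) one_pos.le
      _ = m * m := one_mul _
  have hint1 : ∀ i j, Integrable (fun ω => (1:ℝ) * (X ω i * X ω j)) μ := by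
    intro i j
    refine Integrable.mono' (integrable_const (m * m))
      ((measurable_const.mul ((hXi i).mul (hXi j))).aestronglyMeasurable) ?_
    filter_upwards [hbdd] with ω hω
    have h1 : |X ω i| ≤ m := (coord_abs_le (X ω) i).trans hω
    have h2 : |X ω j| ≤ m := (coord_abs_le (X ω) j).trans hω
    rw [Real.norm_eq_abs, one_mul, abs_mul]
    exact mul_le_mul h1 h2 (abs_nonneg _) hm.le
  rw [Matrix.posDef_iff_dotProduct_mulVec]
  constructor
  · -- Hermitian
    ext i j
    simp only [Matrix.conjTranspose_apply, Matrix.of_apply, star_trivial]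
    congr 1
    funext ω
    ring
  · intro x hx
    -- general quadratic-form identity
    have key : ∀ f : Ω → ℝ, (∀ i j, Integrable (fun ω => f ω * (X ω i * X ω j)) μ) →
        dotProduct (star x)
          (Matrix.mulVec (Matrix.of fun i j => ∫ ω, f ω * (X ω i * X ω j) ∂μ) x)
          = ∫ ω, f ω * (∑ i, x i * X ω i) ^ 2 ∂μ := by
      intro f hf
      simp only [dotProduct, Matrix.mulVec, Matrix.of_apply, Pi.star_apply, star_trivial]
      have hfun : (fun ω => f ω * (∑ i, x i * X ω i) ^ 2)
          = fun ω => ∑ i, ∑ j, x i * (f ω * (X ω i * X ω j) * x j) := by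
        funext ω
        rw [sq, Finset.sum_mul_sum, Finset.mul_sum]
        refine Finset.sum_congr rfl fun i _ => ?_
        rw [Finset.mul_sum]
        refine Finset.sum_congr rfl fun j _ => ?_
        ring
      rw [hfun, integral_finset_sum _ (fun i _ => integrable_finset_sum _
        (fun j _ => (((hf i j).mul_const (x j)).const_mul (x i))))]
      refine Finset.sum_congr rfl fun i _ => ?_
      rw [integral_finset_sum _ (fun j _ => (((hf i j).mul_const (x j)).const_mul (x i)))]
      rw [Finset.mul_sum]
      refine Finset.sum_congr rfl fun j _ => ?_
      rw [integral_const_mul, integral_mul_const]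
    -- positivity of unweighted quadratic form
    have hQ : 0 < ∫ ω, (∑ i, x i * X ω i) ^ 2 ∂μ := by
      have h := hpd.dotProduct_mulVec_pos hx
      have hconv : (Matrix.of fun i j => ∫ ω, X ω i * X ω j ∂μ)
          = Matrix.of fun i j => ∫ ω, (1:ℝ) * (X ω i * X ω j) ∂μ := by
        simp
      rw [hconv, key _ hint1] at h
      simpa using h
    -- integrability of the quadratic integrands
    have hgmeas : Measurable fun ω => (∑ i, x i * X ω i) ^ 2 :=
      (Finset.measurable_sum _ (fun i _ => measurable_const.mul (hXi i))).pow_const 2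
    set C := (∑ i, |x i|) * m with hC
    have hgbd : ∀ᵐ ω ∂μ, ‖(∑ i, x i * X ω i) ^ 2‖ ≤ C ^ 2 := by
      filter_upwards [hbdd] with ω hω
      have hg : |∑ i, x i * X ω i| ≤ C := by
        calc |∑ i, x i * X ω i| ≤ ∑ i, |x i * X ω i| := Finset.abs_sum_le_sum_abs _ _
          _ ≤ ∑ i, |x i| * m := by
              refine Finset.sum_le_sum fun i _ => ?_
              rw [abs_mul]
              exact mul_le_mul_of_nonneg_left ((coord_abs_le (X ω) i).trans hω) (abs_nonneg _)
          _ = C := by rw [hC, Finset.sum_mul]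
      rw [Real.norm_eq_abs, abs_pow]
      exact pow_le_pow_left₀ (abs_nonneg _) hg 2
    have hintg : Integrable (fun ω => (∑ i, x i * X ω i) ^ 2) μ :=
      Integrable.mono' (integrable_const (C ^ 2)) hgmeas.aestronglyMeasurable hgbd
    have hintwg : Integrable (fun ω => w ω * (∑ i, x i * X ω i) ^ 2) μ := by
      refine Integrable.mono' (integrable_const (C ^ 2))
        (hwmeas.mul hgmeas).aestronglyMeasurable ?_
      filter_upwards [hgbd] with ω hω
      rw [Real.norm_eq_abs, abs_mul, abs_of_nonneg (hw01 ω).1]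
      rw [Real.norm_eq_abs] at hω
      have h1 := (hw01 ω).2
      have h0 := (hw01 ω).1
      nlinarith [abs_nonneg ((∑ i, x i * X ω i) ^ 2), le_abs_self ((∑ i, x i * X ω i) ^ 2)]
    rw [key w hintw]
    calc (0:ℝ) < c * ∫ ω, (∑ i, x i * X ω i) ^ 2 ∂μ := mul_pos hcpos hQ
      _ = ∫ ω, c * (∑ i, x i * X ω i) ^ 2 ∂μ := (integral_const_mul _ _).symm
      _ ≤ ∫ ω, w ω * (∑ i, x i * X ω i) ^ 2 ∂μ := by
          refine integral_mono_ae (hintg.const_mul c) hintwg ?_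
          filter_upwards [hwge] with ω hω
          exact mul_le_mul_of_nonneg_right hω (sq_nonneg _)
end

section
/- (Identifiability of the Cox proportional hazards component under full-rank covariance.) Let Z be a random vector in ℝ^q with ‖Z‖ ≤ m almost surely for a constant m > 0 and with positive definite covariance matrix (equivalently, Var(uᵀZ) > 0 for every nonzero u ∈ ℝ^q). Let τ* > 0, let Λ₀, Λ̃ : [0, τ*) → [0, ∞) be nondecreasing functions with Λ₀(t) > 0 for every t ∈ (0, τ*), and let β₀, β̃ ∈ ℝ^q. If for ℙ_Z-almost every z one has exp(−Λ̃(t) e^{β̃ᵀz}) = exp(−Λ₀(t) e^{β₀ᵀz}) for all t ∈ [0, τ*), then β̃ = β₀ and Λ̃(t) = Λ₀(t) for all t ∈ [0, τ*). -/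
open MeasureTheory ProbabilityTheory

lemma variance_of_ae_const {Ω : Type*} [MeasurableSpace Ω] {μ : Measure Ω}
    [IsProbabilityMeasure μ] {X : Ω → ℝ} (hX : AEMeasurable X μ) (c : ℝ)
    (h : X =ᵐ[μ] fun _ => c) : variance X μ = 0 := by
  have hint : μ[X] = c := by
    rw [integral_congr_ae h, integral_const]
    simp
  have : evariance X μ = 0 := by
    rw [evariance_eq_zero_iff hX]
    filter_upwards [h] with ω hω
    simpa [hint] using hω
  rw [variance, this]
  simp

/-- Identifiability of the Cox proportional hazards component under full-rank
covariance: if `Z` is bounded with positive definite covariance matrix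
(equivalently `Var(uᵀZ) > 0` for every nonzero `u`), `Λ₀, Λ̃` are nondecreasing
on `[0, τ*)` with `Λ₀ > 0` on `(0, τ*)`, and the conditional survival functions
`exp(−Λ̃(t) e^{β̃ᵀz})` and `exp(−Λ₀(t) e^{β₀ᵀz})` agree for all `t ∈ [0, τ*)`
for `ℙ_Z`-almost every `z`, then `β̃ = β₀` and `Λ̃ = Λ₀` on `[0, τ*)`. -/
theorem cox_identifiability
    {Ω : Type*} [MeasurableSpace Ω] (μ : Measure Ω) [IsProbabilityMeasure μ]
    {q : ℕ} (m : ℝ) (hm : 0 < m)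
    (Z : Ω → EuclideanSpace ℝ (Fin q)) (hZ : Measurable Z)
    (hbdd : ∀ᵐ ω ∂μ, ‖Z ω‖ ≤ m)
    (hvar : ∀ u : EuclideanSpace ℝ (Fin q), u ≠ 0 →
      0 < variance (fun ω => (inner ℝ u (Z ω) : ℝ)) μ)
    (τstar : ℝ) (hτ : 0 < τstar)
    (Λ₀ Λt : ℝ → ℝ)
    (hΛ₀mono : MonotoneOn Λ₀ (Set.Ico 0 τstar))
    (hΛtmono : MonotoneOn Λt (Set.Ico 0 τstar))
    (hΛ₀nn : ∀ t ∈ Set.Ico (0 : ℝ) τstar, 0 ≤ Λ₀ t)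
    (hΛtnn : ∀ t ∈ Set.Ico (0 : ℝ) τstar, 0 ≤ Λt t)
    (hΛ₀pos : ∀ t ∈ Set.Ioo (0 : ℝ) τstar, 0 < Λ₀ t)
    (β₀ βt : EuclideanSpace ℝ (Fin q))
    (heq : ∀ᵐ z ∂(Measure.map Z μ), ∀ t ∈ Set.Ico (0 : ℝ) τstar,
      Real.exp (-(Λt t * Real.exp (inner ℝ βt z)))
        = Real.exp (-(Λ₀ t * Real.exp (inner ℝ β₀ z)))) :
    βt = β₀ ∧ ∀ t ∈ Set.Ico (0 : ℝ) τstar, Λt t = Λ₀ t := by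
  -- rewrite the a.e. statement as equality of products, pulled back to Ω
  have heq' : ∀ᵐ ω ∂μ, ∀ t ∈ Set.Ico (0 : ℝ) τstar,
      Λt t * Real.exp (inner ℝ βt (Z ω)) = Λ₀ t * Real.exp (inner ℝ β₀ (Z ω)) := by
    filter_upwards [ae_of_ae_map hZ.aemeasurable heq] with ω hω t ht
    have := Real.exp_injective (hω t ht)
    linarith
  -- pick a witness point
  obtain ⟨ω₀, hω₀⟩ := heq'.exists
  -- auxiliary time point
  set t₀ : ℝ := τstar / 2 with ht₀def
  have ht₀Ioo : t₀ ∈ Set.Ioo (0 : ℝ) τstar := ⟨by positivity, by linarith⟩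
  have ht₀Ico : t₀ ∈ Set.Ico (0 : ℝ) τstar := ⟨le_of_lt ht₀Ioo.1, ht₀Ioo.2⟩
  have hΛ₀t₀ : 0 < Λ₀ t₀ := hΛ₀pos t₀ ht₀Ioo
  have hΛtt₀ : 0 < Λt t₀ := by
    have h := hω₀ t₀ ht₀Ico
    have h1 : 0 < Λ₀ t₀ * Real.exp (inner ℝ β₀ (Z ω₀)) := by positivity
    rw [← h] at h1
    have hrw : Λt t₀ = Λ₀ t₀ * Real.exp (inner ℝ β₀ (Z ω₀)) / Real.exp (inner ℝ βt (Z ω₀)) := by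
      rw [eq_div_iff (Real.exp_ne_zero _)]
      exact h
    rw [hrw]; positivity
  -- show βt = β₀
  have hβ : βt = β₀ := by
    by_contra hne
    set u : EuclideanSpace ℝ (Fin q) := βt - β₀ with hu
    have hune : u ≠ 0 := sub_ne_zero.mpr hne
    set c : ℝ := Real.log (Λ₀ t₀ / Λt t₀) with hc
    have haec : (fun ω => (inner ℝ u (Z ω) : ℝ)) =ᵐ[μ] fun _ => c := by
      filter_upwards [heq'] with ω hω
      have h := hω t₀ ht₀Ico
      have hdiv : Real.exp ((inner ℝ βt (Z ω) : ℝ) - inner ℝ β₀ (Z ω)) = Λ₀ t₀ / Λt t₀ := by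
        rw [Real.exp_sub]
        field_simp at h ⊢
        nlinarith [Real.exp_pos (inner ℝ β₀ (Z ω) : ℝ), Real.exp_pos (inner ℝ βt (Z ω) : ℝ)]
      have : (inner ℝ u (Z ω) : ℝ) = (inner ℝ βt (Z ω) : ℝ) - inner ℝ β₀ (Z ω) := by
        simp [hu, inner_sub_left]
      rw [this, hc, ← hdiv, Real.log_exp]
    have hmeas : AEMeasurable (fun ω => (inner ℝ u (Z ω) : ℝ)) μ :=
      ((innerSL ℝ u).continuous.measurable.comp hZ).aemeasurable
    have := variance_of_ae_const hmeas c haec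
    have := hvar u hune
    linarith
  refine ⟨hβ, fun t ht => ?_⟩
  have h := hω₀ t ht
  rw [hβ] at h
  exact mul_right_cancel₀ (Real.exp_ne_zero _) h
end
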